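/- arXiv:2308.06044 — 2 statements merged into one kernel-verified Lean document; each statement's English description precedes it below -/
import Mathlib

section
/- For every q ≥ 1, the class TD_q of graphs of treedepth at most q is homomorphism distinguishing closed, i.e. cl(TD_q) = TD_q. -/
set_option maxHeartbeats 1000000

/-! ## Bundled finite simple graphs and homomorphism counting -/

/-- A bundled finite simple graph (vertex set `Fin n`). -/
abbrev GraphB : Type := Σ n : ℕ, SimpleGraph (Fin n)

/-- The number of graph homomorphisms from `F` to `G`. -/
noncomputable def homCount {V W : Type*} (F : SimpleGraph V) (G : SimpleGraph W) : ℕ :=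
  Set.ncard {f : V → W | ∀ ⦃u v⦄, F.Adj u v → G.Adj (f u) (f v)}

/-- `G` and `H` are homomorphism indistinguishable over the class `𝓕`. -/
def HomIndist (𝓕 : Set GraphB) {V W : Type*} (G : SimpleGraph V) (H : SimpleGraph W) : Prop :=
  ∀ A ∈ 𝓕, homCount A.2 G = homCount A.2 H

/-- The homomorphism distinguishing closure of the class `𝓕`. -/
def hdCl (𝓕 : Set GraphB) : Set GraphB :=
  {A | ∀ G H : GraphB, HomIndist 𝓕 G.2 H.2 → homCount A.2 G.2 = homCount A.2 H.2}

/-! ## Pebble forest covers and the class `T^k_q` -/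

/-- A `k`-pebble forest cover of depth at most `q`.  The rooted forest is encoded by its
ancestor (partial) order `le`, in which the set of ancestors of any vertex is a chain. -/
structure PebbleForestCover {V : Type*} (G : SimpleGraph V) (k q : ℕ) where
  le : V → V → Prop
  le_refl : ∀ v, le v v
  le_antisymm : ∀ u v, le u v → le v u → u = v
  le_trans : ∀ u v w, le u v → le v w → le u w
  downChain : ∀ u v w, le u w → le v w → le u v ∨ le v u
  peb : V → Fin k
  cover : ∀ ⦃u v⦄, G.Adj u v → le u v ∨ le v u
  pebbleCond : ∀ ⦃u v w⦄, G.Adj u v → le u v → le u w → le w v → u ≠ w → peb u ≠ peb w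
  heightLE : ∀ v, Set.ncard {u | le u v} ≤ q

def HasPFC {V : Type*} (G : SimpleGraph V) (k q : ℕ) : Prop :=
  Nonempty (PebbleForestCover G k q)

/-- The class `T^k_q` of graphs admitting a `k`-pebble forest cover of depth at most `q`. -/
def Tclass (k q : ℕ) : Set GraphB := {G | HasPFC G.2 k q}

/-! ## Forest covers, treedepth, tree decompositions, treewidth -/

/-- `G` has a forest cover of height at most `q`, i.e. treedepth at most `q`. -/
def HasForestCover {V : Type*} (G : SimpleGraph V) (q : ℕ) : Prop :=
  ∃ le : V → V → Prop,
    (∀ v, le v v) ∧ (∀ u v, le u v → le v u → u = v) ∧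
    (∀ u v w, le u v → le v w → le u w) ∧
    (∀ u v w, le u w → le v w → le u v ∨ le v u) ∧
    (∀ ⦃u v⦄, G.Adj u v → le u v ∨ le v u) ∧
    (∀ v, Set.ncard {u | le u v} ≤ q)

/-- The class `TD_q` of graphs of treedepth at most `q`. -/
def TDclass (q : ℕ) : Set GraphB := {G | HasForestCover G.2 q}

/-- A tree decomposition of `G`. -/
structure TreeDecomp {V : Type*} (G : SimpleGraph V) where
  n : ℕ
  T : SimpleGraph (Fin n)
  isTree : T.IsTree
  bag : Fin n → Set V
  coversVerts : ∀ v : V, ∃ t, v ∈ bag t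
  coversEdges : ∀ ⦃u v⦄, G.Adj u v → ∃ t, u ∈ bag t ∧ v ∈ bag t
  bagsConnected : ∀ v : V, (SimpleGraph.induce {t | v ∈ bag t} T).Connected

/-- The decomposition has width at most `w`. -/
def TreeDecomp.widthLE {V : Type*} {G : SimpleGraph V} (d : TreeDecomp G) (w : ℕ) : Prop :=
  ∀ t, (d.bag t).ncard ≤ w + 1

/-- `t` lies on the (unique) path from `r` to `s` in the tree `d.T`,
i.e. `t` is an ancestor of `s` when `d.T` is rooted at `r`. -/
def TreeDecomp.anc {V : Type*} {G : SimpleGraph V} (d : TreeDecomp G) (r t s : Fin d.n) : Prop :=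
  ∀ w : d.T.Walk r s, t ∈ w.support

/-- The decomposition has depth at most `q`: for some root `r`, for every node `s`,
the union of the bags of ancestors of `s` has at most `q` vertices. -/
def TreeDecomp.depthLE {V : Type*} {G : SimpleGraph V} (d : TreeDecomp G) (q : ℕ) : Prop :=
  ∃ r : Fin d.n, ∀ s : Fin d.n, (⋃ t ∈ {t | d.anc r t s}, d.bag t).ncard ≤ q

/-- The class `TW_w` of graphs of treewidth at most `w`. -/
def TWclass (w : ℕ) : Set GraphB := {G | ∃ d : TreeDecomp G.2, d.widthLE w}

/-! ## Minors and disjoint unions -/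

/-- `H` is a minor of `G`: there are pairwise disjoint connected nonempty branch sets in `G`,
one for each vertex of `H`, such that edges of `H` are realised between branch sets. -/
def IsMinor {W V : Type*} (H : SimpleGraph W) (G : SimpleGraph V) : Prop :=
  ∃ φ : V → Option W,
    (∀ w : W, (SimpleGraph.induce {v | φ v = some w} G).Connected) ∧
    (∀ ⦃w₁ w₂⦄, H.Adj w₁ w₂ → ∃ v₁ v₂, φ v₁ = some w₁ ∧ φ v₂ = some w₂ ∧ G.Adj v₁ v₂)

/-- The disjoint union of two simple graphs. -/
def sumGraph {V W : Type*} (G : SimpleGraph V) (H : SimpleGraph W) : SimpleGraph (V ⊕ W) where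
  Adj x y :=
    match x, y with
    | Sum.inl a, Sum.inl b => G.Adj a b
    | Sum.inr a, Sum.inr b => H.Adj a b
    | _, _ => False
  symm := by
    constructor
    rintro (a | a) (b | b) h
    · exact G.adj_symm h
    · exact h.elim
    · exact h.elim
    · exact H.adj_symm h
  loopless := by
    constructor
    rintro (a | a) h
    · exact G.irrefl h
    · exact H.irrefl h

/-! ## Cops-and-robber games -/

/-- A robber move from `v` to `u`: a walk in `G` none of whose vertices lies in `A`
(`A` will be `X ∩ Y` for old/new cop positions `X`, `Y` on `G` plus a `k`-clique). -/
def RobberMove {V : Type*} {k : ℕ} (G : SimpleGraph V) (A : Finset (V ⊕ Fin k)) (v u : V) :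
    Prop :=
  ∃ w : G.Walk v u, ∀ x ∈ w.support, Sum.inl x ∉ A

/-- The initial cop position: all `k` cops on the auxiliary clique. -/
def initPos (V : Type*) [DecidableEq V] (k : ℕ) : Finset (V ⊕ Fin k) :=
  Finset.univ.image Sum.inr

/-- In the (non-monotone) cops-and-robber game on `G` with `k` cops, from cop position `X`
and robber position `v`, Cops can catch the robber within `q` further rounds. -/
def CopsCatch {V : Type*} [DecidableEq V] (G : SimpleGraph V) (k : ℕ) :
    ℕ → Finset (V ⊕ Fin k) → V → Prop
  | 0, _, _ => False
  | q + 1, X, v =>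
      ∃ Y : Finset (V ⊕ Fin k), Y.card = k ∧ (X ∩ Y).card = k - 1 ∧
        ∀ u : V, RobberMove G (X ∩ Y) v u → (Sum.inl u ∈ Y ∨ CopsCatch G k q Y u)

/-- Monotone variant: Cops may only move so that the robber escape space does not grow. -/
def MonCopsCatch {V : Type*} [DecidableEq V] (G : SimpleGraph V) (k : ℕ) :
    ℕ → Finset (V ⊕ Fin k) → V → Prop
  | 0, _, _ => False
  | q + 1, X, v =>
      ∃ Y : Finset (V ⊕ Fin k), Y.card = k ∧ (X ∩ Y).card = k - 1 ∧
        (∀ u : V, RobberMove G (X ∩ Y) v u → RobberMove G X v u) ∧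
        ∀ u : V, RobberMove G (X ∩ Y) v u → (Sum.inl u ∈ Y ∨ MonCopsCatch G k q Y u)

/-- Robber can evade capture for `q` further rounds from cop position `X`, robber at `v`. -/
def RobberEsc {V : Type*} [DecidableEq V] (G : SimpleGraph V) (k : ℕ) :
    ℕ → Finset (V ⊕ Fin k) → V → Prop
  | 0, _, _ => True
  | q + 1, X, v =>
      ∀ Y : Finset (V ⊕ Fin k), Y.card = k → (X ∩ Y).card = k - 1 →
        ∃ u : V, RobberMove G (X ∩ Y) v u ∧ Sum.inl u ∉ Y ∧ RobberEsc G k q Y u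

/-- Cops has a winning strategy in the `q`-round `k`-cops-and-robber game on `G`. -/
def CopsWinGame {V : Type*} [DecidableEq V] (G : SimpleGraph V) (k q : ℕ) : Prop :=
  ∀ v : V, CopsCatch G k q (initPos V k) v

/-- Cops has a winning strategy in the monotone `q`-round `k`-cops-and-robber game on `G`. -/
def MonCopsWinGame {V : Type*} [DecidableEq V] (G : SimpleGraph V) (k q : ℕ) : Prop :=
  ∀ v : V, MonCopsCatch G k q (initPos V k) v

/-- Robber has a winning strategy in the `q`-round `k`-cops-and-robber game on `G`. -/
def RobberWinsGame {V : Type*} [DecidableEq V] (G : SimpleGraph V) (k q : ℕ) : Prop :=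
  ∃ v : V, RobberEsc G k q (initPos V k) v

/-- The `h × ℓ` grid graph. -/
def gridGraph (h l : ℕ) : SimpleGraph (Fin h × Fin l) :=
  (SimpleGraph.pathGraph h).boxProd (SimpleGraph.pathGraph l)

/-! ## The CFI-like construction `G_U` -/

/-- Vertices of `G_U`: pairs `(v, S)` with `S` a set of edges incident to `v` whose
parity matches `|{v} ∩ U|`. -/
def CFIvert {V : Type*} (G : SimpleGraph V) (U : Set V) : Type _ :=
  {p : V × Set (Sym2 V) // p.2 ⊆ G.incidenceSet p.1 ∧ (Even p.2.ncard ↔ p.1 ∉ U)}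

/-- The CFI-like graph `G_U` of Roberson. -/
def CFI {V : Type*} (G : SimpleGraph V) (U : Set V) : SimpleGraph (CFIvert G U) where
  Adj x y := G.Adj x.1.1 y.1.1 ∧ s(x.1.1, y.1.1) ∉ symmDiff x.1.2 y.1.2
  symm := by
    constructor
    rintro x y ⟨h1, h2⟩
    refine ⟨h1.symm, ?_⟩
    rw [Sym2.eq_swap, symmDiff_comm]
    exact h2
  loopless := by
    constructor
    rintro x ⟨h1, _⟩
    exact G.irrefl h1

/-! ## Counting first-order logic -/

/-- Formulae of first-order counting logic `C` with variables indexed by `α`. -/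
inductive CForm (α : Type) : Type
  | eq : α → α → CForm α
  | adj : α → α → CForm α
  | not : CForm α → CForm α
  | or : CForm α → CForm α → CForm α
  | and : CForm α → CForm α → CForm α
  | count : ℕ → α → CForm α → CForm α

namespace CForm

variable {α : Type} [DecidableEq α]

/-- Quantifier rank. -/
def qr : CForm α → ℕ
  | eq _ _ => 0
  | adj _ _ => 0
  | not φ => qr φ
  | or φ ψ => max (qr φ) (qr ψ)
  | and φ ψ => max (qr φ) (qr ψ)
  | count _ _ φ => qr φ + 1

/-- Free variables. -/
def freeVars : CForm α → Finset α
  | eq i j => {i, j}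
  | adj i j => {i, j}
  | not φ => freeVars φ
  | or φ ψ => freeVars φ ∪ freeVars ψ
  | and φ ψ => freeVars φ ∪ freeVars ψ
  | count _ i φ => (freeVars φ).erase i

/-- Satisfaction in a simple graph, relative to a partial variable assignment. -/
def Sat {V : Type*} (G : SimpleGraph V) : CForm α → (α → Option V) → Prop
  | eq i j, a => ∃ v, a i = some v ∧ a j = some v
  | adj i j, a => ∃ v w, a i = some v ∧ a j = some w ∧ G.Adj v w
  | not φ, a => ¬ Sat G φ a
  | or φ ψ, a => Sat G φ a ∨ Sat G ψ a
  | and φ ψ, a => Sat G φ a ∧ Sat G ψ a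
  | count t i φ, a =>
      ∃ s : Finset V, t ≤ s.card ∧ ∀ v ∈ s, Sat G φ (fun j => if j = i then some v else a j)

/-- Guarded formulae: every quantifier occurs as `∃^{≥t} y (E x y ∧ ψ)` with `x ≠ y`. -/
def Guarded : CForm α → Prop
  | count _ y (and (adj x y') χ) => y' = y ∧ x ≠ y ∧ Guarded χ
  | count _ _ _ => False
  | eq _ _ => True
  | adj _ _ => True
  | not φ => Guarded φ
  | or φ ψ => Guarded φ ∧ Guarded ψ
  | and φ ψ => Guarded φ ∧ Guarded ψ

end CForm

/-! ## Labelled graphs, products, construction trees -/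

/-- A `k`-labelled finite graph. -/
structure LGraph (k : ℕ) : Type 1 where
  V : Type
  fin : Finite V
  G : SimpleGraph V
  ν : Fin k → Option V

namespace LGraph

variable {k : ℕ}

/-- Number of homomorphisms between `k`-labelled graphs. -/
noncomputable def lhomCount (F G : LGraph k) : ℕ :=
  Set.ncard {f : F.V → G.V |
    (∀ ⦃u v⦄, F.G.Adj u v → G.G.Adj (f u) (f v)) ∧
    ∀ i v, F.ν i = some v → ∃ w, G.ν i = some w ∧ f v = w}

/-- Remove label `i`. -/
def removeLabel (A : LGraph k) (i : Fin k) : LGraph k :=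
  { A with ν := fun j => if j = i then none else A.ν j }

/-- Every vertex carries at least one label. -/
def FullyLabelled (A : LGraph k) : Prop := ∀ v : A.V, ∃ i, A.ν i = some v

/-- Adjacency on the disjoint sum of two labelled graphs. -/
def sumAdj (A B : LGraph k) : A.V ⊕ B.V → A.V ⊕ B.V → Prop
  | Sum.inl u, Sum.inl v => A.G.Adj u v
  | Sum.inr u, Sum.inr v => B.G.Adj u v
  | _, _ => False

lemma sumAdj_symm (A B : LGraph k) : ∀ x y, sumAdj A B x y → sumAdj A B y x := by
  rintro (u | u) (v | v) h
  · exact A.G.adj_symm h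
  · exact h.elim
  · exact h.elim
  · exact B.G.adj_symm h

/-- The gluing relation: vertices carrying the same label get identified. -/
def glue (A B : LGraph k) : A.V ⊕ B.V → A.V ⊕ B.V → Prop := fun x y =>
  ∃ i : Fin k, (A.ν i).map Sum.inl = some x ∧ (B.ν i).map Sum.inr = some y

/-- The product of two `k`-labelled graphs: disjoint union, identify equally labelled
vertices, suppress loops and parallel edges. -/
def product (A B : LGraph k) : LGraph k where
  V := Quot (glue A B)
  fin := by
    haveI := A.fin
    haveI := B.fin
    exact Finite.of_surjective (Quot.mk _) (fun x => Quot.inductionOn x fun a => ⟨a, rfl⟩)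
  G :=
    { Adj := fun x y =>
        x ≠ y ∧ ∃ u v, Quot.mk _ u = x ∧ Quot.mk _ v = y ∧ sumAdj A B u v
      symm := by
        constructor
        rintro x y ⟨hne, u, v, hu, hv, h⟩
        exact ⟨hne.symm, v, u, hv, hu, sumAdj_symm A B u v h⟩
      loopless := ⟨fun x h => h.1 rfl⟩ }
  ν := fun i =>
    ((A.ν i).map fun v => Quot.mk _ (Sum.inl v)).orElse
      fun _ => (B.ν i).map fun v => Quot.mk _ (Sum.inr v)

/-- Isomorphism of labelled graphs. -/
def LIso (A B : LGraph k) : Prop :=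
  ∃ e : A.G ≃g B.G, ∀ i, (A.ν i).map (fun v => e v) = B.ν i

end LGraph

/-- `k`-construction trees: leaves carry (fully labelled) graphs, unary nodes remove
one label, binary nodes take products. -/
inductive CT (k : ℕ) : Type 1
  | leaf : LGraph k → CT k
  | elim : Fin k → CT k → CT k
  | prod : CT k → CT k → CT k

namespace CT

variable {k : ℕ}

/-- The labelled graph constructed by a construction tree. -/
def graphOf : CT k → LGraph k
  | leaf A => A
  | elim i t => (graphOf t).removeLabel i
  | prod t₁ t₂ => (graphOf t₁).product (graphOf t₂)

/-- Validity: leaves are fully labelled and elimination nodes remove an assigned label. -/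
def Valid : CT k → Prop
  | leaf A => A.FullyLabelled
  | elim i t => Valid t ∧ (graphOf t).ν i ≠ none
  | prod t₁ t₂ => Valid t₁ ∧ Valid t₂

/-- Guarded validity: labels may only be removed from vertices with a labelled neighbour. -/
def GuardedValid : CT k → Prop
  | leaf A => A.FullyLabelled
  | elim i t => GuardedValid t ∧
      ∃ v, (graphOf t).ν i = some v ∧
        ∃ j w, (graphOf t).ν j = some w ∧ (graphOf t).G.Adj v w
  | prod t₁ t₂ => GuardedValid t₁ ∧ GuardedValid t₂

/-- The elimination depth: maximal number of elimination nodes on a root-to-leaf path. -/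
def elimDepth : CT k → ℕ
  | leaf _ => 0
  | elim _ t => elimDepth t + 1
  | prod t₁ t₂ => max (elimDepth t₁) (elimDepth t₂)

end CT

/-- The class `L^k_q` of `k`-labelled graphs admitting a `k`-construction tree of
elimination depth at most `q`. -/
def Lclass (k q : ℕ) : Set (LGraph k) :=
  {F | ∃ t : CT k, CT.Valid t ∧ CT.elimDepth t ≤ q ∧ LGraph.LIso (CT.graphOf t) F}

/-- The class `GL^k_q`: as `L^k_q`, but labels may only be removed from vertices with a
labelled neighbour. -/
def GLclass (k q : ℕ) : Set (LGraph k) :=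
  {F | ∃ t : CT k, CT.GuardedValid t ∧ CT.elimDepth t ≤ q ∧ LGraph.LIso (CT.graphOf t) F}

/-- The class `GE^k_q` of unlabelled graphs underlying graphs in `GL^k_q`. -/
def GEclass (k q : ℕ) : Set GraphB :=
  {G | ∃ F ∈ GLclass k q, Nonempty (F.G ≃g G.2)}

/-! ## The bijective pebble game -/

/-- `γ` is a partial isomorphism between `G` and `H`. -/
def PartialIso {V W : Type*} (G : SimpleGraph V) (H : SimpleGraph W) {k : ℕ}
    (γ : Fin k → Option (V × W)) : Prop :=
  ∀ i j vi wi vj wj, γ i = some (vi, wi) → γ j = some (vj, wj) →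
    ((vi = vj ↔ wi = wj) ∧ (G.Adj vi vj ↔ H.Adj wi wj))

/-- Duplicator wins the `q`-round bijective `k`-pebble game on `G` and `H` from position `γ`. -/
def DupWins {V W : Type*} (G : SimpleGraph V) (H : SimpleGraph W) (k : ℕ) :
    ℕ → (Fin k → Option (V × W)) → Prop
  | 0, γ => PartialIso G H γ
  | q + 1, γ => PartialIso G H γ ∧
      ∀ p : Fin k, ∃ f : V ≃ W, ∀ v : V,
        DupWins G H k q (fun j => if j = p then some (v, f v) else γ j)




namespace TDC

variable {V : Type*}

/-- A forest cover of the induced subgraph on `s`, stated set-relatively. -/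
def CoverOn (K : SimpleGraph V) (s : Set V) (q : ℕ) : Prop :=
  ∃ le : V → V → Prop,
    (∀ v ∈ s, le v v) ∧
    (∀ u ∈ s, ∀ v ∈ s, le u v → le v u → u = v) ∧
    (∀ u ∈ s, ∀ v ∈ s, ∀ w ∈ s, le u v → le v w → le u w) ∧
    (∀ u ∈ s, ∀ v ∈ s, ∀ w ∈ s, le u w → le v w → le u v ∨ le v u) ∧
    (∀ u ∈ s, ∀ v ∈ s, K.Adj u v → le u v ∨ le v u) ∧
    (∀ v ∈ s, Set.ncard {u | u ∈ s ∧ le u v} ≤ q)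

theorem hasForestCover_iff_coverOn (K : SimpleGraph V) (q : ℕ) :
    HasForestCover K q ↔ CoverOn K Set.univ q := by
  constructor
  · rintro ⟨le, h1, h2, h3, h4, h5, h6⟩
    exact ⟨le, fun v _ => h1 v, fun u _ v _ => h2 u v, fun u _ v _ w _ => h3 u v w,
      fun u _ v _ w _ => h4 u v w, fun u _ v _ h => h5 h, fun v _ => by
        simpa using h6 v⟩
  · rintro ⟨le, h1, h2, h3, h4, h5, h6⟩
    exact ⟨le, fun v => h1 v trivial, fun u v => h2 u trivial v trivial,
      fun u v w => h3 u trivial v trivial w trivial,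
      fun u v w => h4 u trivial v trivial w trivial,
      fun u v h => h5 u trivial v trivial h, fun v => by simpa using h6 v trivial⟩

theorem CoverOn.mono {K : SimpleGraph V} {s : Set V} {q q' : ℕ} (h : CoverOn K s q)
    (hq : q ≤ q') : CoverOn K s q' := by
  obtain ⟨le, h1, h2, h3, h4, h5, h6⟩ := h
  exact ⟨le, h1, h2, h3, h4, h5, fun v hv => (h6 v hv).trans hq⟩

theorem CoverOn.subset [Finite V] {K : SimpleGraph V} {s t : Set V} {q : ℕ} (h : CoverOn K s q)
    (hts : t ⊆ s) : CoverOn K t q := by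
  obtain ⟨le, h1, h2, h3, h4, h5, h6⟩ := h
  refine ⟨le, fun v hv => h1 v (hts hv), fun u hu v hv => h2 u (hts hu) v (hts hv),
    fun u hu v hv w hw => h3 u (hts hu) v (hts hv) w (hts hw),
    fun u hu v hv w hw => h4 u (hts hu) v (hts hv) w (hts hw),
    fun u hu v hv hadj => h5 u (hts hu) v (hts hv) hadj, fun v hv => ?_⟩
  have hsub : {u | u ∈ t ∧ le u v} ⊆ {u | u ∈ s ∧ le u v} := by
    intro u hu
    exact ⟨hts hu.1, hu.2⟩
  exact le_trans (Set.ncard_le_ncard hsub (Set.toFinite _)) (h6 v (hts hv))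

/-! ### Reachability within a set -/

def SReach (K : SimpleGraph V) (s : Set V) (a b : V) : Prop :=
  Relation.ReflTransGen (fun x y => x ∈ s ∧ y ∈ s ∧ K.Adj x y) a b

def compS (K : SimpleGraph V) (s : Set V) (a : V) : Set V := {b | SReach K s a b}

theorem SReach.symm' {K : SimpleGraph V} {s : Set V} {a b : V} (h : SReach K s a b) :
    SReach K s b a :=
  (@Relation.ReflTransGen.stdSymm _ _ ⟨fun _ _ hxy => ⟨hxy.2.1, hxy.1, hxy.2.2.symm⟩⟩).symm _ _ h

theorem SReach.trans' {K : SimpleGraph V} {s : Set V} {a b c : V} (h : SReach K s a b)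
    (h' : SReach K s b c) : SReach K s a c := Relation.ReflTransGen.trans h h'

theorem mem_compS_self (K : SimpleGraph V) (s : Set V) (a : V) : a ∈ compS K s a :=
  Relation.ReflTransGen.refl

theorem compS_eq_of_mem {K : SimpleGraph V} {s : Set V} {a b : V} (h : b ∈ compS K s a) :
    compS K s b = compS K s a := by
  ext c
  exact ⟨fun hc => SReach.trans' h hc, fun hc => SReach.trans' (SReach.symm' h) hc⟩

theorem mem_of_sReach {K : SimpleGraph V} {s : Set V} {a b : V} (h : SReach K s a b) :
    b = a ∨ b ∈ s := by
  induction h with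
  | refl => exact Or.inl rfl
  | tail _ hstep _ => exact Or.inr hstep.2.1

theorem compS_subset_insert (K : SimpleGraph V) (s : Set V) (a : V) :
    compS K s a ⊆ insert a s := fun _ hb => by
  rcases mem_of_sReach hb with h | h
  · exact h ▸ Set.mem_insert _ _
  · exact Set.mem_insert_of_mem _ h

theorem compS_subset_of_mem {K : SimpleGraph V} {s : Set V} {a : V} (ha : a ∈ s) :
    compS K s a ⊆ s := fun b hb => by
  rcases mem_of_sReach hb with h | h
  · exact h ▸ ha
  · exact h

theorem adj_mem_compS {K : SimpleGraph V} {s : Set V} {a x y : V} (hx : x ∈ compS K s a)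
    (hxs : x ∈ s) (hys : y ∈ s) (hadj : K.Adj x y) : y ∈ compS K s a :=
  Relation.ReflTransGen.tail hx ⟨hxs, hys, hadj⟩

theorem compS_mono {K : SimpleGraph V} {s t : Set V} (hst : s ⊆ t) (a : V) :
    compS K s a ⊆ compS K t a := fun _ hb =>
  Relation.ReflTransGen.mono (r := fun x y => x ∈ s ∧ y ∈ s ∧ K.Adj x y)
    (p := fun x y => x ∈ t ∧ y ∈ t ∧ K.Adj x y) (fun _ _ h => ⟨hst h.1, hst h.2.1, h.2.2⟩) _ _ hb



variable {V : Type*}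

theorem exists_least [Finite V] (le : V → V → Prop) :
    ∀ n : ℕ, ∀ s : Set V, s.ncard ≤ n →
      (∀ u ∈ s, ∀ v ∈ s, ∀ w ∈ s, le u v → le v w → le u w) →
      (∀ v ∈ s, le v v) →
      (∀ u ∈ s, ∀ v ∈ s, le u v ∨ le v u) → s.Nonempty →
      ∃ m ∈ s, ∀ x ∈ s, le m x := by
  intro n
  induction n with
  | zero =>
    intro s hcard _ _ _ hne
    exfalso
    have := Set.ncard_pos (Set.toFinite s) |>.mpr hne
    omega
  | succ n ih =>
    rintro s hcard htrans hrefl hchain ⟨a, ha⟩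
    by_cases hall : ∀ x ∈ s, le a x
    · exact ⟨a, ha, hall⟩
    · push_neg at hall
      obtain ⟨b, hb, hnab⟩ := hall
      have hba : le b a := (hchain a ha b hb).resolve_left hnab
      have hbs' : b ∈ {x | x ∈ s ∧ le x a ∧ x ≠ a} :=
        ⟨hb, hba, fun h => hnab (h ▸ hrefl a ha)⟩
      have hsub : {x | x ∈ s ∧ le x a ∧ x ≠ a} ⊆ s := fun x hx => hx.1
      have hssub : {x | x ∈ s ∧ le x a ∧ x ≠ a} ⊂ s := by
        refine ⟨hsub, fun hss => ?_⟩
        exact (hss ha).2.2 rfl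
      have hcard' : {x | x ∈ s ∧ le x a ∧ x ≠ a}.ncard ≤ n := by
        have := Set.ncard_lt_ncard hssub (Set.toFinite s)
        omega
      obtain ⟨m, hm, hleast⟩ := ih _ hcard'
        (fun u hu v hv w hw => htrans u (hsub hu) v (hsub hv) w (hsub hw))
        (fun v hv => hrefl v (hsub hv))
        (fun u hu v hv => hchain u (hsub hu) v (hsub hv)) ⟨b, hbs'⟩
      refine ⟨m, hsub hm, fun x hx => ?_⟩
      by_cases hxa : x = a
      · exact hxa ▸ hm.2.1
      · rcases hchain x hx a ha with h | h
        · exact hleast x ⟨hx, h, hxa⟩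
        · exact htrans m (hsub hm) a ha x hx hm.2.1 h

theorem rootStep [Finite V] {K : SimpleGraph V} {s : Set V} {q : ℕ} {g₀ : V}
    (hg : g₀ ∉ s) (h : CoverOn K s q) : CoverOn K (insert g₀ s) (q + 1) := by
  obtain ⟨le, h1, h2, h3, h4, h5, h6⟩ := h
  refine ⟨fun x y => (x = g₀ ∧ y ∈ insert g₀ s) ∨ (x ∈ s ∧ y ∈ s ∧ le x y),
    ?_, ?_, ?_, ?_, ?_, ?_⟩
  · rintro v (rfl | hv)
    · exact Or.inl ⟨rfl, Set.mem_insert _ _⟩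
    · exact Or.inr ⟨hv, hv, h1 v hv⟩
  · rintro u hu v hv h' h''
    rcases h' with ⟨hueq, -⟩ | ⟨hus, hvs, huv⟩
    · rcases h'' with ⟨hveq, -⟩ | ⟨-, hus2, -⟩
      · rw [hueq, hveq]
      · exact absurd (hueq ▸ hus2) hg
    · rcases h'' with ⟨hveq, -⟩ | ⟨-, -, hvu⟩
      · exact absurd (hveq ▸ hvs) hg
      · exact h2 u hus v hvs huv hvu
  · rintro u hu v hv w hw (⟨rfl, -⟩ | ⟨hus, hvs, huv⟩) h'
    · exact Or.inl ⟨rfl, hw⟩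
    · rcases h' with ⟨rfl, -⟩ | ⟨hvs', hws, hvw⟩
      · exact absurd hvs hg
      · exact Or.inr ⟨hus, hws, h3 u hus v hvs w hws huv hvw⟩
  · rintro u hu v hv w hw (⟨rfl, -⟩ | ⟨hus, hws, huw⟩) h'
    · exact Or.inl (Or.inl ⟨rfl, hv⟩)
    · rcases h' with ⟨rfl, -⟩ | ⟨hvs, hws', hvw⟩
      · exact Or.inr (Or.inl ⟨rfl, hu⟩)
      · rcases h4 u hus v hvs w hws huw hvw with h' | h'
        · exact Or.inl (Or.inr ⟨hus, hvs, h'⟩)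
        · exact Or.inr (Or.inr ⟨hvs, hus, h'⟩)
  · rintro u hu v hv hadj
    rcases hu with rfl | hus
    · exact Or.inl (Or.inl ⟨rfl, hv⟩)
    · rcases hv with rfl | hvs
      · exact Or.inr (Or.inl ⟨rfl, Set.mem_insert_of_mem _ hus⟩)
      · rcases h5 u hus v hvs hadj with h' | h'
        · exact Or.inl (Or.inr ⟨hus, hvs, h'⟩)
        · exact Or.inr (Or.inr ⟨hvs, hus, h'⟩)
  · intro v hv
    rcases hv with hveq | hvs
    · have hset : {u | u ∈ insert g₀ s ∧ ((u = g₀ ∧ v ∈ insert g₀ s) ∨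
          (u ∈ s ∧ v ∈ s ∧ le u v))} = {g₀} := by
        ext u
        constructor
        · rintro ⟨-, ⟨rfl, -⟩ | ⟨-, hgs, -⟩⟩
          · rfl
          · exact absurd (hveq ▸ hgs) hg
        · rintro rfl
          exact ⟨Set.mem_insert _ _, Or.inl ⟨rfl, by rw [hveq]; exact Set.mem_insert _ _⟩⟩
      rw [hset]
      simp
    · have hsub : {u | u ∈ insert g₀ s ∧ ((u = g₀ ∧ v ∈ insert g₀ s) ∨
          (u ∈ s ∧ v ∈ s ∧ le u v))} ⊆ insert g₀ {u | u ∈ s ∧ le u v} := by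
        rintro u ⟨hu, ⟨rfl, -⟩ | ⟨hus, -, hle'⟩⟩
        · exact Set.mem_insert _ _
        · exact Set.mem_insert_of_mem _ ⟨hus, hle'⟩
      calc Set.ncard _ ≤ (insert g₀ {u | u ∈ s ∧ le u v}).ncard :=
            Set.ncard_le_ncard hsub (Set.toFinite _)
        _ ≤ {u | u ∈ s ∧ le u v}.ncard + 1 := Set.ncard_insert_le _ _
        _ ≤ q + 1 := by have := h6 v hvs; omega


theorem glueCover [Finite V] [LinearOrder V] {K : SimpleGraph V} {s : Set V} {q : ℕ}
    (h : ∀ v ∈ s, CoverOn K (compS K s v) q) : CoverOn K s q := by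
  classical
  choose leF hF1 hF2 hF3 hF4 hF5 hF6 using h
  set leG : V → V → V → Prop := fun z x y => ∃ hz : z ∈ s, leF z hz x y with hleG
  have hG1 : ∀ z, ∀ hz : z ∈ s, ∀ v ∈ compS K s z, leG z v v :=
    fun z hz v hv => ⟨hz, hF1 z hz v hv⟩
  have hG2 : ∀ z, z ∈ s → ∀ u ∈ compS K s z, ∀ v ∈ compS K s z,
      leG z u v → leG z v u → u = v := by
    rintro z hz u hu v hv ⟨hz1, h1⟩ ⟨hz2, h2⟩
    exact hF2 z hz1 u hu v hv h1 h2
  have hG3 : ∀ z, z ∈ s → ∀ u ∈ compS K s z, ∀ v ∈ compS K s z, ∀ w ∈ compS K s z,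
      leG z u v → leG z v w → leG z u w := by
    rintro z hz u hu v hv w hw ⟨hz1, h1⟩ ⟨hz2, h2⟩
    exact ⟨hz, hF3 z hz1 u hu v hv w hw h1 h2⟩
  have hG4 : ∀ z, z ∈ s → ∀ u ∈ compS K s z, ∀ v ∈ compS K s z, ∀ w ∈ compS K s z,
      leG z u w → leG z v w → leG z u v ∨ leG z v u := by
    rintro z hz u hu v hv w hw ⟨hz1, h1⟩ ⟨hz2, h2⟩
    rcases hF4 z hz1 u hu v hv w hw h1 h2 with h' | h'
    · exact Or.inl ⟨hz, h'⟩
    · exact Or.inr ⟨hz, h'⟩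
  have hG5 : ∀ z, z ∈ s → ∀ u ∈ compS K s z, ∀ v ∈ compS K s z,
      K.Adj u v → leG z u v ∨ leG z v u := by
    rintro z hz u hu v hv hadj
    rcases hF5 z hz u hu v hv hadj with h' | h'
    · exact Or.inl ⟨hz, h'⟩
    · exact Or.inr ⟨hz, h'⟩
  have hG6 : ∀ z, ∀ hz : z ∈ s, ∀ v ∈ compS K s z,
      {u | u ∈ compS K s z ∧ leG z u v}.ncard ≤ q := by
    intro z hz v hv
    have hseteq : {u | u ∈ compS K s z ∧ leG z u v} =
        {u | u ∈ compS K s z ∧ leF z hz u v} := by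
      ext u
      constructor
      · rintro ⟨hu, hz1, h1⟩
        exact ⟨hu, h1⟩
      · rintro ⟨hu, h1⟩
        exact ⟨hu, hz, h1⟩
    rw [hseteq]
    exact hF6 z hz v hv
  clear hF1 hF2 hF3 hF4 hF5 hF6
  have hmemfin : ∀ v : V, v ∈ (Set.toFinite (compS K s v)).toFinset := by
    intro v
    rw [Set.Finite.mem_toFinset]
    exact mem_compS_self K s v
  set rep : V → V := fun v => (Set.toFinite (compS K s v)).toFinset.min' ⟨v, hmemfin v⟩
    with hrep
  have rep_mem : ∀ v : V, rep v ∈ compS K s v := by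
    intro v
    have := Finset.min'_mem (Set.toFinite (compS K s v)).toFinset ⟨v, hmemfin v⟩
    rwa [Set.Finite.mem_toFinset] at this
  have rep_eq : ∀ a b : V, b ∈ compS K s a → rep b = rep a := by
    intro a b hb
    have hcomp : compS K s b = compS K s a := compS_eq_of_mem hb
    have hfin : (Set.toFinite (compS K s b)).toFinset =
        (Set.toFinite (compS K s a)).toFinset := by
      ext x
      simp only [Set.Finite.mem_toFinset, hcomp]
    have h1 : rep b ∈ (Set.toFinite (compS K s a)).toFinset := by
      rw [← hfin, Set.Finite.mem_toFinset]
      exact rep_mem b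
    have h2 : rep a ∈ (Set.toFinite (compS K s b)).toFinset := by
      rw [hfin, Set.Finite.mem_toFinset]
      exact rep_mem a
    exact le_antisymm (Finset.min'_le _ _ h2) (Finset.min'_le _ _ h1)
  have rep_s : ∀ v : V, v ∈ s → rep v ∈ s := fun v hv =>
    compS_subset_of_mem hv (rep_mem v)
  have comp_rep : ∀ v : V, compS K s (rep v) = compS K s v := fun v =>
    compS_eq_of_mem (rep_mem v)
  have mem_comp_rep : ∀ v : V, v ∈ compS K s (rep v) := by
    intro v
    rw [comp_rep]
    exact mem_compS_self K s v
  have mem_comp_of_rep_eq : ∀ u v : V, rep u = rep v → u ∈ compS K s (rep v) := by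
    intro u v hr
    rw [← hr]
    exact mem_comp_rep u
  refine ⟨fun x y => x ∈ s ∧ y ∈ s ∧ rep x = rep y ∧ leG (rep y) x y,
    ?_, ?_, ?_, ?_, ?_, ?_⟩
  · intro v hv
    exact ⟨hv, hv, rfl, hG1 (rep v) (rep_s v hv) v (mem_comp_rep v)⟩
  · rintro u hu v hv ⟨hus, hvs, hruv, hlef⟩ ⟨hvs2, hus2, hrvu, hlef2⟩
    rw [← hrvu] at hlef2
    exact hG2 (rep v) (rep_s v hvs) u (mem_comp_of_rep_eq u v hruv) v (mem_comp_rep v)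
      hlef hlef2
  · rintro u hu v hv w hw ⟨hus, hvs, hruv, hlef⟩ ⟨hvs2, hws, hrvw, hlef2⟩
    refine ⟨hu, hw, hruv.trans hrvw, ?_⟩
    rw [hrvw] at hlef
    exact hG3 (rep w) (rep_s w hws) u (mem_comp_of_rep_eq u w (hruv.trans hrvw)) v
      (mem_comp_of_rep_eq v w hrvw) w (mem_comp_rep w) hlef hlef2
  · rintro u hu v hv w hw ⟨hus, hws, hruw, hlef⟩ ⟨hvs, hws2, hrvw, hlef2⟩
    have hmemu : u ∈ compS K s (rep w) := mem_comp_of_rep_eq u w hruw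
    have hmemv : v ∈ compS K s (rep w) := mem_comp_of_rep_eq v w hrvw
    rcases hG4 (rep w) (rep_s w hws) u hmemu v hmemv w (mem_comp_rep w) hlef hlef2
      with h' | h'
    · refine Or.inl ⟨hu, hv, hruw.trans hrvw.symm, ?_⟩
      rw [hrvw]
      exact h'
    · refine Or.inr ⟨hv, hu, hrvw.trans hruw.symm, ?_⟩
      rw [hruw]
      exact h'
  · intro u hu v hv hadj
    have hvcomp : v ∈ compS K s u := adj_mem_compS (mem_compS_self K s u) hu hv hadj
    have hruv : rep v = rep u := rep_eq u v hvcomp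
    rcases hG5 (rep u) (rep_s u hu) u (mem_comp_rep u) v (mem_comp_of_rep_eq v u hruv)
      hadj with h' | h'
    · refine Or.inl ⟨hu, hv, hruv.symm, ?_⟩
      rw [hruv]
      exact h'
    · exact Or.inr ⟨hv, hu, hruv, h'⟩
  · intro v hv
    have hsub : {u | u ∈ s ∧ u ∈ s ∧ v ∈ s ∧ rep u = rep v ∧ leG (rep v) u v} ⊆
        {u | u ∈ compS K s (rep v) ∧ leG (rep v) u v} := by
      rintro u ⟨hus, hus2, hvs2, hruv, hlef⟩
      exact ⟨mem_comp_of_rep_eq u v hruv, hlef⟩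
    calc Set.ncard _ ≤ _ := Set.ncard_le_ncard hsub (Set.toFinite _)
      _ ≤ q := hG6 (rep v) (rep_s v hv) v (mem_comp_rep v)

/-! ### Parity utilities -/

theorem odd_iff_odd_of_cast_eq {m n : ℕ} (h : (m : ZMod 2) = (n : ZMod 2)) :
    Odd m ↔ Odd n := by
  rw [← ZMod.natCast_eq_one_iff_odd, ← ZMod.natCast_eq_one_iff_odd, h]

theorem natCast_zmod2_ite (n : ℕ) : (n : ZMod 2) = if Odd n then 1 else 0 := by
  split_ifs with h
  · exact ZMod.natCast_eq_one_iff_odd.mpr h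
  · exact ZMod.natCast_eq_zero_iff_even.mpr (Nat.not_odd_iff_even.mp h)

/-! ### Selecting a part with odd intersection -/

theorem odd_part {α : Type*} [Finite α] (R : α → Set α) (hRmem : ∀ a, a ∈ R a)
    (hReq : ∀ a b, b ∈ R a → R b = R a) :
    ∀ n : ℕ, ∀ S : Set α, S.ncard ≤ n → Odd S.ncard →
      ∃ a ∈ S, Odd (S ∩ R a).ncard := by
  intro n
  induction n with
  | zero =>
    intro S hcard hodd
    rw [Nat.le_zero] at hcard
    rw [hcard] at hodd
    simp at hodd
  | succ n ih =>
    intro S hcard hodd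
    have hne : S.Nonempty := by
      rw [← Set.ncard_pos (Set.toFinite S)]
      rcases hodd with ⟨k, hk⟩
      omega
    obtain ⟨a, ha⟩ := hne
    have hdisj : Disjoint (S ∩ R a) (S \ R a) := by
      apply Set.disjoint_of_subset (Set.inter_subset_right) (le_refl _)
      exact Set.disjoint_sdiff_right
    have hunion : S = (S ∩ R a) ∪ (S \ R a) := by
      rw [Set.inter_union_diff]
    have hsum : S.ncard = (S ∩ R a).ncard + (S \ R a).ncard := by
      nth_rewrite 1 [hunion]
      exact Set.ncard_union_eq hdisj (Set.toFinite _) (Set.toFinite _)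
    by_cases h1 : Odd (S ∩ R a).ncard
    · exact ⟨a, ha, h1⟩
    · have h2 : Odd (S \ R a).ncard := by
        rcases Nat.even_or_odd (S \ R a).ncard with he | ho
        · exfalso
          rw [Nat.odd_iff] at hodd
          rw [Nat.even_iff] at he
          rw [Nat.odd_iff] at h1
          omega
        · exact ho
      have hlt : (S \ R a).ncard ≤ n := by
        have hmem : a ∈ S ∩ R a := ⟨ha, hRmem a⟩
        have : 0 < (S ∩ R a).ncard := (Set.ncard_pos (Set.toFinite _)).mpr ⟨a, hmem⟩
        omega
      obtain ⟨b, hb, hbodd⟩ := ih (S \ R a) hlt h2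
      refine ⟨b, hb.1, ?_⟩
      have heq : (S \ R a) ∩ R b = S ∩ R b := by
        ext x
        constructor
        · rintro ⟨⟨hxS, -⟩, hxR⟩
          exact ⟨hxS, hxR⟩
        · rintro ⟨hxS, hxR⟩
          refine ⟨⟨hxS, fun hxa => ?_⟩, hxR⟩
          have h3 : R x = R b := hReq b x hxR
          have h4 : R x = R a := hReq a x hxa
          exact hb.2 (h4 ▸ h3.symm ▸ hRmem b)
      rwa [heq] at hbodd

/-! ### Certificates -/

theorem ncard_eq_filter_card {α : Type*} [Fintype α] (p : α → Prop) [DecidablePred p] :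
    {x | p x}.ncard = (Finset.univ.filter p).card := by
  rw [← Set.ncard_coe_finset]
  congr 1
  ext x
  simp

variable {VT VK : Type*}

/-- Number of `D`-edges at `v` (within `sT`) whose other endpoint maps to `g'`. -/
noncomputable def certDeg (T : SimpleGraph VT) (φ : VT → VK) (D : Set (Sym2 VT)) (sT : Set VT)
    (v : VT) (g' : VK) : ℕ :=
  Set.ncard {u | u ∈ sT ∧ T.Adj v u ∧ s(v, u) ∈ D ∧ φ u = g'}

/-- An inconsistency certificate, relative to vertex sets `sT`, `tK`. -/
def CertOn (T : SimpleGraph VT) (K : SimpleGraph VK) (φ : VT → VK) (W : Set VT)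
    (D : Set (Sym2 VT)) (sT : Set VT) (tK : Set VK) : Prop :=
  ∀ v ∈ sT, ∀ g' ∈ tK, K.Adj (φ v) g' → (Odd (certDeg T φ D sT v g') ↔ v ∈ W)

noncomputable def nOn (φ : VT → VK) (W : Set VT) (sT : Set VT) (g : VK) : ℕ :=
  Set.ncard {v | v ∈ sT ∧ v ∈ W ∧ φ v = g}

theorem cert_parity_adj [Finite VT] {T : SimpleGraph VT} {K : SimpleGraph VK}
    {φ : VT → VK} {W : Set VT} {D : Set (Sym2 VT)} {sT : Set VT} {tK : Set VK}
    (hcert : CertOn T K φ W D sT tK)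
    {g g' : VK} (hg : g ∈ tK) (hg' : g' ∈ tK) (hadj : K.Adj g g') :
    Odd (nOn φ W sT g) ↔ Odd (nOn φ W sT g') := by
  classical
  letI : Fintype VT := Fintype.ofFinite VT
  -- the set of `D`-edges realising the `K`-edge `(g, g')`, as ordered pairs
  set P : VK → VK → Finset (VT × VT) := fun a b =>
    Finset.univ.filter (fun p : VT × VT => p.1 ∈ sT ∧ p.2 ∈ sT ∧ T.Adj p.1 p.2 ∧
      s(p.1, p.2) ∈ D ∧ φ p.1 = a ∧ φ p.2 = b) with hP
  have hswap : ∀ a b : VK, (P a b).card = (P b a).card := by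
    intro a b
    apply Finset.card_bij (fun p _ => Prod.swap p)
    · intro p hp
      simp only [hP, Finset.mem_filter, Finset.mem_univ, true_and] at hp ⊢
      obtain ⟨h1, h2, h3, h4, h5, h6⟩ := hp
      exact ⟨h2, h1, h3.symm, Sym2.eq_swap ▸ h4, h6, h5⟩
    · intro p _ q _ h
      exact Prod.swap_injective h
    · intro p hp
      refine ⟨Prod.swap p, ?_, by simp⟩
      simp only [hP, Finset.mem_filter, Finset.mem_univ, true_and] at hp ⊢
      obtain ⟨h1, h2, h3, h4, h5, h6⟩ := hp
      exact ⟨h2, h1, h3.symm, Sym2.eq_swap ▸ h4, h6, h5⟩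
  have hcount : ∀ a b : VK, a ∈ tK → b ∈ tK → K.Adj a b →
      ((P a b).card : ZMod 2) = (nOn φ W sT a : ZMod 2) := by
    intro a b ha hb hab
    have hfib : (P a b).card =
        ∑ v ∈ Finset.univ.filter (fun v => v ∈ sT ∧ φ v = a),
          ((P a b).filter (fun p => p.1 = v)).card := by
      apply Finset.card_eq_sum_card_fiberwise
      intro p hp
      simp only [hP, Finset.mem_coe, Finset.mem_filter, Finset.mem_univ, true_and] at hp ⊢
      exact ⟨hp.1, hp.2.2.2.2.1⟩
    have hfibcard : ∀ v, v ∈ sT → φ v = a →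
        ((P a b).filter (fun p => p.1 = v)).card = certDeg T φ D sT v b := by
      intro v hv hφv
      rw [certDeg, ncard_eq_filter_card]
      apply Finset.card_bij (fun p _ => p.2)
      · intro p hp
        simp only [hP, Finset.mem_filter, Finset.mem_univ, true_and] at hp ⊢
        obtain ⟨⟨h1, h2, h3, h4, h5, h6⟩, h7⟩ := hp
        subst h7
        exact ⟨h2, h3, h4, h6⟩
      · intro p hp q hq h
        simp only [hP, Finset.mem_filter] at hp hq
        exact Prod.ext (hp.2.trans hq.2.symm) h
      · intro u hu
        simp only [Finset.mem_filter, Finset.mem_univ, true_and] at hu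
        refine ⟨(v, u), ?_, rfl⟩
        simp only [hP, Finset.mem_filter, Finset.mem_univ, true_and]
        exact ⟨⟨hv, hu.1, hu.2.1, hu.2.2.1, hφv, hu.2.2.2⟩, by trivial⟩
    calc ((P a b).card : ZMod 2)
        = ∑ v ∈ Finset.univ.filter (fun v => v ∈ sT ∧ φ v = a),
            ((certDeg T φ D sT v b : ℕ) : ZMod 2) := by
          rw [hfib]
          push_cast
          apply Finset.sum_congr rfl
          intro v hv
          simp only [Finset.mem_filter, Finset.mem_univ, true_and] at hv
          rw [hfibcard v hv.1 hv.2]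
      _ = ∑ v ∈ Finset.univ.filter (fun v => v ∈ sT ∧ φ v = a),
            (if v ∈ W then (1 : ZMod 2) else 0) := by
          apply Finset.sum_congr rfl
          intro v hv
          simp only [Finset.mem_filter, Finset.mem_univ, true_and] at hv
          rw [natCast_zmod2_ite]
          congr 1
          rw [eq_iff_iff]
          have := hcert v hv.1 b hb (hv.2 ▸ hab)
          exact this
      _ = (((Finset.univ.filter (fun v => v ∈ sT ∧ φ v = a)).filter
            (fun v => v ∈ W)).card : ZMod 2) := by rw [Finset.sum_boole]
      _ = ((nOn φ W sT a : ℕ) : ZMod 2) := by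
          rw [nOn, ncard_eq_filter_card]
          congr 2
          ext v
          simp only [Finset.mem_filter, Finset.mem_univ, true_and]
          tauto
  have h1 := hcount g g' hg hg' hadj
  have h2 := hcount g' g hg' hg hadj.symm
  rw [hswap g g'] at h1
  exact odd_iff_odd_of_cast_eq (h1.symm.trans h2)

theorem cert_parity_reach [Finite VT] {T : SimpleGraph VT} {K : SimpleGraph VK}
    {φ : VT → VK} {W : Set VT} {D : Set (Sym2 VT)} {sT : Set VT} {tK : Set VK}
    (hcert : CertOn T K φ W D sT tK) {u₀ : VK}
    (hodd : Odd (nOn φ W sT u₀)) : ∀ g ∈ compS K tK u₀, Odd (nOn φ W sT g) := by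
  intro g hg
  induction hg with
  | refl => exact hodd
  | tail hxy hstep ih =>
    exact (cert_parity_adj hcert hstep.1 hstep.2.1 hstep.2.2).mp ih

theorem certLemma {VT VK : Type*} [Finite VT] [Finite VK] [LinearOrder VK]
    (T : SimpleGraph VT) (K : SimpleGraph VK) (φ : VT → VK) :
    ∀ q : ℕ, ∀ (W : Set VT) (D : Set (Sym2 VT)) (sT : Set VT) (tK : Set VK) (u₀ : VK),
      (∀ v ∈ sT, φ v ∈ tK) →
      (∀ v ∈ sT, ∀ u, T.Adj v u → φ u ∈ tK → u ∈ sT) →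
      CertOn T K φ W D sT tK →
      u₀ ∈ tK → Odd (nOn φ W sT u₀) →
      CoverOn T sT q →
      CoverOn K (compS K tK u₀) q := by
  intro q
  induction q with
  | zero =>
    intro W D sT tK u₀ hsub hclosed hcert hu₀ hodd hcov
    exfalso
    have hne : {v | v ∈ sT ∧ v ∈ W ∧ φ v = u₀}.Nonempty := by
      rw [← Set.ncard_pos (Set.toFinite _)]
      rcases hodd with ⟨k, hk⟩
      rw [nOn] at hk
      omega
    obtain ⟨v₀, hv₀⟩ := hne
    obtain ⟨le, h1, h2, h3, h4, h5, h6⟩ := hcov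
    have h7 := h6 v₀ hv₀.1
    have h8 : v₀ ∈ {u | u ∈ sT ∧ le u v₀} := ⟨hv₀.1, h1 v₀ hv₀.1⟩
    have := (Set.ncard_pos (Set.toFinite _)).mpr ⟨v₀, h8⟩
    omega
  | succ q ih =>
    intro W D sT tK u₀ hsub hclosed hcert hu₀ hodd hcov
    classical
    -- Step 1: restrict the T-side to a connected part with odd count over u₀
    obtain ⟨v₀, hv₀, hv₀odd⟩ := odd_part (fun a => compS T sT a) (mem_compS_self T sT)
      (fun a b hb => compS_eq_of_mem hb) _ {v | v ∈ sT ∧ v ∈ W ∧ φ v = u₀} le_rfl hodd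
    set sT₁ : Set VT := compS T sT v₀ with hsT₁
    have hsub1 : sT₁ ⊆ sT := compS_subset_of_mem hv₀.1
    have hclosed1 : ∀ v ∈ sT₁, ∀ u, T.Adj v u → φ u ∈ tK → u ∈ sT₁ := by
      intro v hv u hadj hφu
      exact adj_mem_compS hv (hsub1 hv) (hclosed v (hsub1 hv) u hadj hφu) hadj
    have hdeg1 : ∀ v ∈ sT₁, ∀ g' ∈ tK, certDeg T φ D sT₁ v g' = certDeg T φ D sT v g' := by
      intro v hv g' hg'
      unfold certDeg
      congr 1
      ext u
      simp only [Set.mem_setOf_eq]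
      constructor
      · rintro ⟨hu1, hu2, hu3, hu4⟩
        exact ⟨hsub1 hu1, hu2, hu3, hu4⟩
      · rintro ⟨hu1, hu2, hu3, hu4⟩
        exact ⟨hclosed1 v hv u hu2 (hu4 ▸ hg'), hu2, hu3, hu4⟩
    have hcert1 : CertOn T K φ W D sT₁ tK := by
      intro v hv g' hg' hadj
      rw [hdeg1 v hv g' hg']
      exact hcert v (hsub1 hv) g' hg' hadj
    have hodd1 : Odd (nOn φ W sT₁ u₀) := by
      have hseteq : {v | v ∈ sT₁ ∧ v ∈ W ∧ φ v = u₀} =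
          {v | v ∈ sT ∧ v ∈ W ∧ φ v = u₀} ∩ compS T sT v₀ := by
        ext v
        constructor
        · rintro ⟨hx1, hx2, hx3⟩
          exact ⟨⟨hsub1 hx1, hx2, hx3⟩, hx1⟩
        · rintro ⟨⟨hx1, hx2, hx3⟩, hx4⟩
          exact ⟨hx4, hx2, hx3⟩
      rw [nOn, hseteq]
      exact hv₀odd
    -- Step 2: parity propagation along K within tK
    have hprop : ∀ g ∈ compS K tK u₀, Odd (nOn φ W sT₁ g) :=
      cert_parity_reach hcert1 hodd1
    -- Step 3: the common root of the T-part
    obtain ⟨le, h1, h2, h3, h4, h5, h6⟩ := hcov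
    have hanc : ∀ v, ∀ _ : v ∈ sT, ∃ m ∈ {u | u ∈ sT ∧ le u v},
        ∀ x ∈ {u | u ∈ sT ∧ le u v}, le m x := by
      intro v hv
      apply exists_least le (Set.ncard {u | u ∈ sT ∧ le u v}) _ le_rfl
      · intro a ha b hb c hc hab hbc
        exact h3 a ha.1 b hb.1 c hc.1 hab hbc
      · intro a ha
        exact h1 a ha.1
      · intro a ha b hb
        exact h4 a ha.1 b hb.1 v hv ha.2 hb.2
      · exact ⟨v, hv, h1 v hv⟩
    choose rt hrt1 hrt2 using hanc
    have hrt_le : ∀ u, ∀ hu : u ∈ sT, ∀ v, ∀ hv : v ∈ sT, le u v →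
        rt u hu = rt v hv := by
      intro u hu v hv huv
      have hmu := hrt1 u hu
      have hmv := hrt1 v hv
      have hmu_anc_v : rt u hu ∈ {x | x ∈ sT ∧ le x v} :=
        ⟨hmu.1, h3 _ hmu.1 u hu v hv hmu.2 huv⟩
      have h_v_le_u : le (rt v hv) (rt u hu) := hrt2 v hv _ hmu_anc_v
      rcases h4 (rt v hv) hmv.1 u hu v hv hmv.2 huv with hc | hc
      · have : le (rt u hu) (rt v hv) := hrt2 u hu _ ⟨hmv.1, hc⟩
        exact h2 _ hmu.1 _ hmv.1 this h_v_le_u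
      · have : le (rt u hu) (rt v hv) := h3 _ hmu.1 u hu _ hmv.1 hmu.2 hc
        exact h2 _ hmu.1 _ hmv.1 this h_v_le_u
    have hrt_adj : ∀ u, ∀ hu : u ∈ sT, ∀ v, ∀ hv : v ∈ sT, T.Adj u v →
        rt u hu = rt v hv := by
      intro u hu v hv hadj
      rcases h5 u hu v hv hadj with hc | hc
      · exact hrt_le u hu v hv hc
      · exact (hrt_le v hv u hu hc).symm
    have hrt_const : ∀ v, v ∈ sT₁ → ∀ hvT : v ∈ sT, rt v hvT = rt v₀ hv₀.1 := by
      intro v hv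
      induction hv with
      | refl => intro h; rfl
      | tail hxy hstep ihc =>
        intro hvT
        exact (hrt_adj _ hvT _ hstep.1 hstep.2.2.symm).trans (ihc hstep.1)
    set r : VT := rt v₀ hv₀.1 with hrdef
    set g₀ : VK := φ r with hg₀def
    -- Step 4: remove g₀
    set tK' : Set VK := {g | g ∈ tK ∧ g ≠ g₀} with htK'
    set sT' : Set VT := {v | v ∈ sT₁ ∧ φ v ≠ g₀} with hsT'
    have hsub' : ∀ v ∈ sT', φ v ∈ tK' := fun v hv => ⟨hsub v (hsub1 hv.1), hv.2⟩
    have hclosed' : ∀ v ∈ sT', ∀ u, T.Adj v u → φ u ∈ tK' → u ∈ sT' := by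
      intro v hv u hadj hφu
      exact ⟨hclosed1 v hv.1 u hadj hφu.1, hφu.2⟩
    have hdeg' : ∀ v ∈ sT', ∀ g' ∈ tK', certDeg T φ D sT' v g' = certDeg T φ D sT₁ v g' := by
      intro v hv g' hg'
      unfold certDeg
      congr 1
      ext u
      simp only [Set.mem_setOf_eq]
      constructor
      · rintro ⟨hu1, hu2, hu3, hu4⟩
        exact ⟨hu1.1, hu2, hu3, hu4⟩
      · rintro ⟨hu1, hu2, hu3, hu4⟩
        exact ⟨⟨hu1, fun hc => hg'.2 (hu4 ▸ hc)⟩, hu2, hu3, hu4⟩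
    have hcert' : CertOn T K φ W D sT' tK' := by
      intro v hv g' hg' hadj
      rw [hdeg' v hv g' hg']
      exact hcert1 v hv.1 g' hg'.1 hadj
    have hnon' : ∀ g', g' ≠ g₀ → nOn φ W sT' g' = nOn φ W sT₁ g' := by
      intro g' hne
      unfold nOn
      congr 1
      ext v
      simp only [Set.mem_setOf_eq]
      constructor
      · rintro ⟨hv1, hv2, hv3⟩
        exact ⟨hv1.1, hv2, hv3⟩
      · rintro ⟨hv1, hv2, hv3⟩
        exact ⟨⟨hv1, fun hc => hne (hv3 ▸ hc)⟩, hv2, hv3⟩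
    have hcov' : CoverOn T sT' q := by
      refine ⟨le, fun v hv => h1 v (hsub1 hv.1),
        fun u hu v hv => h2 u (hsub1 hu.1) v (hsub1 hv.1),
        fun u hu v hv w hw => h3 u (hsub1 hu.1) v (hsub1 hv.1) w (hsub1 hw.1),
        fun u hu v hv w hw => h4 u (hsub1 hu.1) v (hsub1 hv.1) w (hsub1 hw.1),
        fun u hu v hv hadj => h5 u (hsub1 hu.1) v (hsub1 hv.1) hadj, ?_⟩
      intro v hv
      have hvT : v ∈ sT := hsub1 hv.1
      have hrmem : r ∈ {u | u ∈ sT ∧ le u v} := by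
        have := hrt_const v hv.1 hvT
        rw [← this]
        exact hrt1 v hvT
      have hsubdiff : {u | u ∈ sT' ∧ le u v} ⊆ {u | u ∈ sT ∧ le u v} \ {r} := by
        rintro u ⟨hu1, hu2⟩
        refine ⟨⟨hsub1 hu1.1, hu2⟩, ?_⟩
        intro hc
        rw [Set.mem_singleton_iff] at hc
        subst hc
        exact hu1.2 rfl
      have hd : ({u | u ∈ sT ∧ le u v} \ {r}).ncard = {u | u ∈ sT ∧ le u v}.ncard - 1 :=
        Set.ncard_diff_singleton_of_mem hrmem
      have hle1 := Set.ncard_le_ncard hsubdiff (Set.toFinite _)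
      have hle2 := h6 v hvT
      have hpos := (Set.ncard_pos (Set.toFinite {u | u ∈ sT ∧ le u v})).mpr ⟨r, hrmem⟩
      omega
    -- Step 5
    by_cases hg₀C : g₀ ∈ compS K tK u₀
    · -- g₀ lies in the component of u₀: root-and-glue
      have hC_tK : compS K tK u₀ ⊆ tK := compS_subset_of_mem hu₀
      have hcompsub : ∀ g₁, g₁ ∈ compS K tK u₀ → g₁ ≠ g₀ →
          compS K {g | g ∈ compS K tK u₀ ∧ g ≠ g₀} g₁ = compS K tK' g₁ := by
        intro g₁ hg₁ hne
        apply Set.Subset.antisymm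
        · refine compS_mono (fun g hg => ?_) g₁
          exact ⟨hC_tK hg.1, hg.2⟩
        · intro x hx
          induction hx with
          | refl => exact mem_compS_self _ _ _
          | @tail b c hxy hstep ihc =>
            have hb : b ∈ {g | g ∈ compS K tK u₀ ∧ g ≠ g₀} := by
              rcases mem_of_sReach ihc with hbe | hbe
              · rw [hbe]
                exact ⟨hg₁, hne⟩
              · exact hbe
            refine adj_mem_compS ihc hb ⟨?_, hstep.2.1.2⟩ hstep.2.2
            exact adj_mem_compS hb.1 hstep.1.1 hstep.2.1.1 hstep.2.2
      have hglue : ∀ g₁ ∈ {g | g ∈ compS K tK u₀ ∧ g ≠ g₀},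
          CoverOn K (compS K {g | g ∈ compS K tK u₀ ∧ g ≠ g₀} g₁) q := by
        intro g₁ hg₁
        rw [hcompsub g₁ hg₁.1 hg₁.2]
        apply ih W D sT' tK' g₁ hsub' hclosed' hcert' ⟨hC_tK hg₁.1, hg₁.2⟩ ?_ hcov'
        rw [hnon' g₁ hg₁.2]
        exact hprop g₁ hg₁.1
      have hcovC' : CoverOn K {g | g ∈ compS K tK u₀ ∧ g ≠ g₀} q := glueCover hglue
      have hroot := rootStep (g₀ := g₀) (fun hc => hc.2 rfl) hcovC'
      have hins : insert g₀ {g | g ∈ compS K tK u₀ ∧ g ≠ g₀} = compS K tK u₀ := by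
        ext x
        constructor
        · rintro (rfl | hx)
          · exact hg₀C
          · exact hx.1
        · intro hx
          by_cases hxe : x = g₀
          · exact hxe ▸ Set.mem_insert _ _
          · exact Set.mem_insert_of_mem _ ⟨hx, hxe⟩
      rwa [hins] at hroot
    · -- g₀ not in the component: the component is untouched
      have hcompeq : compS K tK' u₀ = compS K tK u₀ := by
        apply Set.Subset.antisymm
        · refine compS_mono (fun g hg => ?_) u₀
          exact hg.1
        · intro x hx
          induction hx with
          | refl => exact mem_compS_self _ _ _
          | @tail b c hxy hstep ihc =>
            have hbC : b ∈ compS K tK u₀ := hxy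
            have hcC : c ∈ compS K tK u₀ :=
              adj_mem_compS hbC hstep.1 hstep.2.1 hstep.2.2
            refine adj_mem_compS ihc ⟨hstep.1, ?_⟩ ⟨hstep.2.1, ?_⟩ hstep.2.2
            · intro hc
              exact hg₀C (hc ▸ hbC)
            · intro hc
              exact hg₀C (hc ▸ hcC)
      have hu₀' : u₀ ∈ tK' := ⟨hu₀, fun hc => hg₀C (hc ▸ mem_compS_self K tK u₀)⟩
      have hodd' : Odd (nOn φ W sT' u₀) := by
        rw [hnon' u₀ hu₀'.2]
        exact hodd1
      have hres := ih W D sT' tK' u₀ hsub' hclosed' hcert' hu₀' hodd' hcov'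
      rw [hcompeq] at hres
      exact hres.mono (Nat.le_succ q)

/-! ### Homomorphism sets and CFI lifts -/

def HomSet {α β : Type*} (F : SimpleGraph α) (G : SimpleGraph β) : Set (α → β) :=
  {f | ∀ ⦃u v⦄, F.Adj u v → G.Adj (f u) (f v)}

theorem homCount_eq_card {α β : Type*} (F : SimpleGraph α) (G : SimpleGraph β) :
    homCount F G = Nat.card (HomSet F G) := (Nat.card_coe_set_eq _)|>.symm

theorem ncard_symmDiff_even_iff {α : Type*} [Finite α] (X Y : Set α) :
    Even (symmDiff X Y).ncard ↔ (Even X.ncard ↔ Even Y.ncard) := by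
  have hX : X.ncard = (X \ Y).ncard + (X ∩ Y).ncard := by
    rw [← Set.ncard_union_eq (Set.disjoint_of_subset_right Set.inter_subset_right
      disjoint_sdiff_self_left) (Set.toFinite _) (Set.toFinite _), Set.diff_union_inter]
  have hY : Y.ncard = (Y \ X).ncard + (X ∩ Y).ncard := by
    rw [Set.inter_comm X Y, ← Set.ncard_union_eq (Set.disjoint_of_subset_right
      Set.inter_subset_right disjoint_sdiff_self_left) (Set.toFinite _) (Set.toFinite _),
      Set.diff_union_inter]
  have hS : (symmDiff X Y).ncard = (X \ Y).ncard + (Y \ X).ncard := by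
    rw [Set.symmDiff_def, Set.ncard_union_eq (Set.disjoint_of_subset_right
      Set.diff_subset disjoint_sdiff_self_left) (Set.toFinite _) (Set.toFinite _)]
  rw [hX, hY, hS, Nat.even_add, Nat.even_add, Nat.even_add]
  tauto

theorem notMem_symmDiff_symmDiff {α : Type*} {e : α} {X P Y Q : Set α}
    (h1 : e ∉ symmDiff X Y) (h2 : e ∉ symmDiff P Q) :
    e ∉ symmDiff (symmDiff X P) (symmDiff Y Q) := by
  rw [symmDiff_symmDiff_symmDiff_comm]
  simp only [Set.mem_symmDiff] at *
  tauto

/-- `S` is valid CFI lift data over the base map `φ`. -/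
def IsLift {VT VA : Type*} (T : SimpleGraph VT) (A : SimpleGraph VA) (U : Set VA)
    (φ : VT → VA) (S : VT → Set (Sym2 VA)) : Prop :=
  (∀ v, S v ⊆ A.incidenceSet (φ v)) ∧
  (∀ v, Even (S v).ncard ↔ φ v ∉ U) ∧
  (∀ ⦃u v⦄, T.Adj u v → s(φ u, φ v) ∉ symmDiff (S u) (S v))

theorem baseHom {VT VA : Type*} {T : SimpleGraph VT} {A : SimpleGraph VA} {U : Set VA}
    {f : VT → CFIvert A U} (hf : f ∈ HomSet T (CFI A U)) :
    (fun v => (f v).1.1) ∈ HomSet T A := fun _ _ hadj => (hf hadj).1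

theorem liftOfHom {VT VA : Type*} {T : SimpleGraph VT} {A : SimpleGraph VA} {U : Set VA}
    {f : VT → CFIvert A U} (hf : f ∈ HomSet T (CFI A U)) :
    IsLift T A U (fun v => (f v).1.1) (fun v => (f v).1.2) :=
  ⟨fun v => (f v).2.1, fun v => (f v).2.2, fun _ _ hadj => (hf hadj).2⟩

/-- Twisting a homomorphism into one CFI graph by `σ`-data gives a homomorphism into
another CFI graph over the same base. -/
noncomputable def twistMap {VT VA : Type*} [Finite VA] {T : SimpleGraph VT}
    {A : SimpleGraph VA} {U₁ U₂ : Set VA} (σ : (VT → VA) → VT → Set (Sym2 VA))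
    (hσ : ∀ φ, φ ∈ HomSet T A → (∃ S', IsLift T A U₁ φ S') →
      (∀ v, σ φ v ⊆ A.incidenceSet (φ v)) ∧
      (∀ v, (Even (σ φ v).ncard ↔ ((φ v ∉ U₁) ↔ (φ v ∉ U₂)))) ∧
      (∀ ⦃u v⦄, T.Adj u v → s(φ u, φ v) ∉ symmDiff (σ φ u) (σ φ v)))
    (f : ↥(HomSet T (CFI A U₁))) : ↥(HomSet T (CFI A U₂)) := by
  refine ⟨fun v => ⟨((f.1 v).1.1, symmDiff (f.1 v).1.2 (σ (fun w => (f.1 w).1.1) v)), ?_, ?_⟩,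
    ?_⟩
  · have hspec := hσ _ (baseHom f.2) ⟨_, liftOfHom f.2⟩
    intro e he
    rcases Set.mem_symmDiff.mp he with ⟨h1, -⟩ | ⟨h1, -⟩
    · exact (f.1 v).2.1 h1
    · exact hspec.1 v h1
  · have hspec := hσ _ (baseHom f.2) ⟨_, liftOfHom f.2⟩
    rw [ncard_symmDiff_even_iff]
    have hp1 := (f.1 v).2.2
    have hp2 := hspec.2.1 v
    tauto
  · intro u v hadj
    have hspec := hσ _ (baseHom f.2) ⟨_, liftOfHom f.2⟩
    exact ⟨(f.2 hadj).1, notMem_symmDiff_symmDiff (f.2 hadj).2 (hspec.2.2 hadj)⟩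

theorem twistMap_injective {VT VA : Type*} [Finite VA] {T : SimpleGraph VT}
    {A : SimpleGraph VA} {U₁ U₂ : Set VA} (σ : (VT → VA) → VT → Set (Sym2 VA)) (hσ)
    : Function.Injective (twistMap (T := T) (A := A) (U₁ := U₁) (U₂ := U₂) σ hσ) := by
  intro g g' h
  have hval : ∀ v, (twistMap σ hσ g).1 v = (twistMap σ hσ g').1 v :=
    fun v => congrFun (congrArg Subtype.val h) v
  have hbase : ∀ v, (g.1 v).1.1 = (g'.1 v).1.1 := by
    intro v
    have := congrArg (fun x => x.1.1) (hval v)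
    exact this
  have hbasefun : (fun w => (g.1 w).1.1) = (fun w => (g'.1 w).1.1) := funext hbase
  have hsnd : ∀ v, symmDiff (g.1 v).1.2 (σ (fun w => (g.1 w).1.1) v) =
      symmDiff (g'.1 v).1.2 (σ (fun w => (g'.1 w).1.1) v) := by
    intro v
    have := congrArg (fun x => x.1.2) (hval v)
    exact this
  apply Subtype.ext
  funext v
  apply Subtype.ext
  have hS : (g.1 v).1.2 = (g'.1 v).1.2 := by
    have h2 := hsnd v
    rw [← hbasefun] at h2
    exact symmDiff_left_injective _ h2
  exact Prod.ext (hbase v) hS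

theorem twistMap_leftInverse {VT VA : Type*} [Finite VA] {T : SimpleGraph VT}
    {A : SimpleGraph VA} {U₁ U₂ : Set VA} (σ : (VT → VA) → VT → Set (Sym2 VA)) (hσ₁ hσ₂) :
    ∀ f : ↥(HomSet T (CFI A U₁)),
      twistMap (U₁ := U₂) (U₂ := U₁) σ hσ₂ (twistMap (U₁ := U₁) (U₂ := U₂) σ hσ₁ f) = f := by
  intro f
  apply Subtype.ext
  funext v
  apply Subtype.ext
  show ((f.1 v).1.1, symmDiff (symmDiff (f.1 v).1.2 (σ (fun w => (f.1 w).1.1) v))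
    (σ (fun w => (f.1 w).1.1) v)) = (f.1 v).1
  rw [symmDiff_symmDiff_cancel_right]

theorem homCount_CFI_twist {VT VA : Type*} [Finite VT] [Finite VA]
    (T : SimpleGraph VT) (A : SimpleGraph VA) (U : Set VA)
    (hlift : ∀ φ ∈ HomSet T A, ∃ S, IsLift T A U φ S) :
    homCount T (CFI A ∅) = homCount T (CFI A U) := by
  classical
  set σ : (VT → VA) → VT → Set (Sym2 VA) := fun φ =>
    if h : φ ∈ HomSet T A then (hlift φ h).choose else fun _ => ∅ with hσdef
  have hspec : ∀ φ, φ ∈ HomSet T A → IsLift T A U φ (σ φ) := by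
    intro φ h
    simp only [hσdef, dif_pos h]
    exact (hlift φ h).choose_spec
  have hσ₁ : ∀ φ, φ ∈ HomSet T A → (∃ S', IsLift T A ∅ φ S') →
      (∀ v, σ φ v ⊆ A.incidenceSet (φ v)) ∧
      (∀ v, (Even (σ φ v).ncard ↔ ((φ v ∉ (∅ : Set VA)) ↔ (φ v ∉ U)))) ∧
      (∀ ⦃u v⦄, T.Adj u v → s(φ u, φ v) ∉ symmDiff (σ φ u) (σ φ v)) := by
    intro φ h _
    obtain ⟨hinc, hpar, hedge⟩ := hspec φ h
    refine ⟨hinc, fun v => ?_, hedge⟩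
    have := hpar v
    simp only [Set.mem_empty_iff_false, not_false_iff]
    tauto
  have hσ₂ : ∀ φ, φ ∈ HomSet T A → (∃ S', IsLift T A U φ S') →
      (∀ v, σ φ v ⊆ A.incidenceSet (φ v)) ∧
      (∀ v, (Even (σ φ v).ncard ↔ ((φ v ∉ U) ↔ (φ v ∉ (∅ : Set VA))))) ∧
      (∀ ⦃u v⦄, T.Adj u v → s(φ u, φ v) ∉ symmDiff (σ φ u) (σ φ v)) := by
    intro φ h _
    obtain ⟨hinc, hpar, hedge⟩ := hspec φ h
    refine ⟨hinc, fun v => ?_, hedge⟩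
    have := hpar v
    simp only [Set.mem_empty_iff_false, not_false_iff]
    tauto
  rw [homCount_eq_card, homCount_eq_card]
  exact Nat.card_congr ⟨twistMap σ hσ₁, twistMap σ hσ₂,
    twistMap_leftInverse σ hσ₁ hσ₂, twistMap_leftInverse σ hσ₂ hσ₁⟩

theorem no_lift_id {VA : Type*} [Finite VA] (A : SimpleGraph VA) (u₀ : VA) :
    ¬ ∃ S, IsLift A A {u₀} (fun v => v) S := by
  classical
  letI : Fintype VA := Fintype.ofFinite VA
  rintro ⟨S, hinc, hpar, hedge⟩
  have key : ∀ e : Sym2 VA, (∑ v : VA, (if e ∈ S v then (1 : ZMod 2) else 0)) = 0 := by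
    intro e
    induction e with
    | _ a b =>
      by_cases hadj : A.Adj a b
      · have hne : a ≠ b := hadj.ne
        have hvanish : ∀ v ∈ Finset.univ, v ∉ ({a, b} : Finset VA) →
            (if s(a, b) ∈ S v then (1 : ZMod 2) else 0) = 0 := by
          intro v _ hv
          rw [if_neg]
          intro hmem
          have hv' : v ∈ s(a, b) := (hinc v hmem).2
          rw [Sym2.mem_iff] at hv'
          simp only [Finset.mem_insert, Finset.mem_singleton] at hv
          tauto
        rw [← Finset.sum_subset (Finset.subset_univ ({a, b} : Finset VA)) hvanish,
          Finset.sum_insert (by simp [hne]), Finset.sum_singleton]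
        have hs := hedge hadj
        rw [Set.mem_symmDiff] at hs
        push_neg at hs
        by_cases hA : s(a, b) ∈ S a
        · have hB : s(a, b) ∈ S b := by tauto
          rw [if_pos hA, if_pos hB]
          decide
        · have hB : s(a, b) ∉ S b := by tauto
          rw [if_neg hA, if_neg hB]
          decide
      · apply Finset.sum_eq_zero
        intro v _
        rw [if_neg]
        intro hmem
        have hedgeSet := (hinc v hmem).1
        rw [SimpleGraph.mem_edgeSet] at hedgeSet
        exact hadj hedgeSet
  have h1 : (∑ v : VA, ((S v).ncard : ZMod 2)) = 1 := by
    have hterm : ∀ v : VA, ((S v).ncard : ZMod 2) = if v = u₀ then 1 else 0 := by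
      intro v
      rw [natCast_zmod2_ite]
      by_cases hv : v = u₀
      · rw [if_pos hv, if_pos]
        rw [Nat.not_even_iff_odd.symm]
        intro hc
        exact ((hpar v).mp hc) (by simp [hv])
      · rw [if_neg hv, if_neg]
        rw [Nat.not_even_iff_odd.symm]
        push_neg
        exact (hpar v).mpr (by simp [hv])
    rw [Finset.sum_congr rfl (fun v _ => hterm v)]
    rw [Finset.sum_ite_eq' Finset.univ u₀ (fun _ => (1 : ZMod 2))]
    simp
  have h2 : (∑ v : VA, ((S v).ncard : ZMod 2)) = 0 := by
    have hterm : ∀ v : VA, ((S v).ncard : ZMod 2) =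
        ∑ e : Sym2 VA, (if e ∈ S v then (1 : ZMod 2) else 0) := by
      intro v
      rw [Finset.sum_boole]
      have : (S v).ncard = (Finset.univ.filter (fun e => e ∈ S v)).card := by
        rw [← ncard_eq_filter_card]
        rfl
      rw [this]
    rw [Finset.sum_congr rfl (fun v _ => hterm v), Finset.sum_comm]
    exact Finset.sum_eq_zero (fun e _ => key e)
  rw [h1] at h2
  exact one_ne_zero h2

instance CFIvert.finite {V : Type*} [Finite V] (G : SimpleGraph V) (U : Set V) :
    Finite (CFIvert G U) := by
  unfold CFIvert
  infer_instance

theorem homCount_CFI_lt {VA : Type*} [Finite VA] (A : SimpleGraph VA) (u₀ : VA) :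
    homCount A (CFI A {u₀}) < homCount A (CFI A ∅) := by
  classical
  set σ : (VA → VA) → VA → Set (Sym2 VA) := fun φ =>
    if h : ∃ S, IsLift A A {u₀} φ S then h.choose else fun _ => ∅ with hσdef
  have hσ₂ : ∀ φ, φ ∈ HomSet A A → (∃ S', IsLift A A {u₀} φ S') →
      (∀ v, σ φ v ⊆ A.incidenceSet (φ v)) ∧
      (∀ v, (Even (σ φ v).ncard ↔ ((φ v ∉ ({u₀} : Set VA)) ↔ (φ v ∉ (∅ : Set VA))))) ∧
      (∀ ⦃u v⦄, A.Adj u v → s(φ u, φ v) ∉ symmDiff (σ φ u) (σ φ v)) := by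
    intro φ hφ hex
    have hlift : IsLift A A {u₀} φ (σ φ) := by
      simp only [hσdef, dif_pos hex]
      exact hex.choose_spec
    obtain ⟨hinc, hpar, hedge⟩ := hlift
    refine ⟨hinc, fun v => ?_, hedge⟩
    have := hpar v
    simp only [Set.mem_empty_iff_false, not_false_iff]
    tauto
  letI : Fintype ↥(HomSet A (CFI A {u₀})) := Fintype.ofFinite _
  letI : Fintype ↥(HomSet A (CFI A ∅)) := Fintype.ofFinite _
  rw [homCount_eq_card, homCount_eq_card, Nat.card_eq_fintype_card,
    Nat.card_eq_fintype_card]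
  have hf₀mem : ∀ v : VA, (∅ : Set (Sym2 VA)) ⊆ A.incidenceSet v ∧
      (Even (∅ : Set (Sym2 VA)).ncard ↔ v ∉ (∅ : Set VA)) := by
    intro v
    constructor
    · exact Set.empty_subset _
    · simp
  set f₀ : VA → CFIvert A ∅ := fun v => ⟨(v, ∅), hf₀mem v⟩ with hf₀
  have hf₀hom : f₀ ∈ HomSet A (CFI A ∅) := by
    intro u v hadj
    refine ⟨hadj, ?_⟩
    simp [hf₀, Set.mem_symmDiff]
  apply Fintype.card_lt_of_injective_of_notMem (twistMap σ hσ₂) (twistMap_injective σ hσ₂)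
    (b := ⟨f₀, hf₀hom⟩)
  rintro ⟨g, hg⟩
  have hbase : ∀ v, (g.1 v).1.1 = v := by
    intro v
    have := congrArg (fun x => (x.1 v).1.1) hg
    exact this
  have hbasefun : (fun w => (g.1 w).1.1) = (fun v : VA => v) := funext hbase
  have hliftg := liftOfHom g.2
  rw [hbasefun] at hliftg
  exact no_lift_id A u₀ ⟨_, hliftg⟩

theorem zmod2_cases : ∀ a : ZMod 2, a = 0 ∨ a = 1 := by decide

theorem zmod2_add_self : ∀ a : ZMod 2, a + a = 0 := by decide

theorem exists_dual {Y : Type*} [AddCommGroup Y] [Module (ZMod 2) Y]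
    (p : Submodule (ZMod 2) Y) (b : Y) (hb : b ∉ p) :
    ∃ g : Module.Dual (ZMod 2) Y, (∀ y ∈ p, g y = 0) ∧ g b = 1 := by
  have hπ : p.mkQ b ≠ 0 := by
    intro h
    rw [Submodule.mkQ_apply] at h
    exact hb ((Submodule.Quotient.mk_eq_zero p).mp h)
  have hnot := (Module.forall_dual_apply_eq_zero_iff (ZMod 2) (p.mkQ b)).not
  rw [not_forall] at hnot
  obtain ⟨ψ, hψ⟩ := hnot.mpr hπ
  refine ⟨ψ.comp p.mkQ, fun y hy => ?_, ?_⟩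
  · have : p.mkQ y = 0 := by
      rw [Submodule.mkQ_apply]
      exact (Submodule.Quotient.mk_eq_zero p).mpr hy
    simp [this]
  · rcases zmod2_cases (ψ (p.mkQ b)) with h | h
    · exact absurd h hψ
    · simpa using h

/-- Sum of `ZMod 2` values equals the count of ones. -/
theorem zmod2_sum_eq_card {α : Type*} (s : Finset α) (f : α → ZMod 2) [DecidableEq α] :
    ∑ e ∈ s, f e = (((s.filter (fun e => f e = 1)).card : ℕ) : ZMod 2) := by
  classical
  rw [← Finset.sum_boole]
  apply Finset.sum_congr rfl
  intro e _
  rcases zmod2_cases (f e) with h | h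
  · rw [h, if_neg]
    simp [h]
  · rw [h]
    simp

theorem zmod2_eq_of_add_eq_zero : ∀ a b : ZMod 2, a + b = 0 → a = b := by decide

theorem cert_of_no_lift {VT VA : Type*} [Finite VT] [Finite VA]
    (T : SimpleGraph VT) (A : SimpleGraph VA) (u₀ : VA) (φ : VT → VA)
    (hφ : φ ∈ HomSet T A)
    (hno : ¬ ∃ S, IsLift T A {u₀} φ S) :
    ∃ (W : Set VT) (D : Set (Sym2 VT)),
      CertOn T A φ W D Set.univ Set.univ ∧ Odd (nOn φ W Set.univ u₀) := by
  classical
  letI : Fintype VT := Fintype.ofFinite VT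
  letI : Fintype VA := Fintype.ofFinite VA
  set inc : VT → Finset (Sym2 VA) :=
    fun v => Finset.univ.filter (fun e => e ∈ A.incidenceSet (φ v)) with hinc
  set Lf : ((VT × Sym2 VA) → ZMod 2) → ((VT ⊕ ((VT × VT) ⊕ (VT × Sym2 VA))) → ZMod 2) :=
    fun x => Sum.elim (fun v => ∑ e ∈ inc v, x (v, e))
      (Sum.elim
        (fun p => if T.Adj p.1 p.2 then x (p.1, s(φ p.1, φ p.2)) + x (p.2, s(φ p.1, φ p.2))
          else 0)
        (fun p => if p.2 ∈ A.incidenceSet (φ p.1) then 0 else x p)) with hLf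
  have hadd : ∀ x y, Lf (x + y) = Lf x + Lf y := by
    intro x y
    funext i
    rcases i with v | p | p
    · simp only [hLf, Sum.elim_inl, Pi.add_apply]
      rw [← Finset.sum_add_distrib]
    · simp only [hLf, Sum.elim_inr, Sum.elim_inl, Pi.add_apply]
      split_ifs
      · ring
      · simp
    · simp only [hLf, Sum.elim_inr, Pi.add_apply]
      split_ifs
      · simp
      · rfl
  have hsmul : ∀ (c : ZMod 2) x, Lf (c • x) = c • Lf x := by
    intro c x
    funext i
    rcases i with v | p | p
    · simp only [hLf, Sum.elim_inl, Pi.smul_apply, smul_eq_mul, Finset.mul_sum]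
    · simp only [hLf, Sum.elim_inr, Sum.elim_inl, Pi.smul_apply, smul_eq_mul]
      split_ifs
      · ring
      · simp
    · simp only [hLf, Sum.elim_inr, Pi.smul_apply, smul_eq_mul]
      split_ifs
      · simp
      · rfl
  set L : ((VT × Sym2 VA) → ZMod 2) →ₗ[ZMod 2]
      ((VT ⊕ ((VT × VT) ⊕ (VT × Sym2 VA))) → ZMod 2) := ⟨⟨Lf, hadd⟩, hsmul⟩ with hL
  set b : (VT ⊕ ((VT × VT) ⊕ (VT × Sym2 VA))) → ZMod 2 :=
    Sum.elim (fun v => if φ v = u₀ then 1 else 0) (fun _ => 0) with hb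
  -- if b were in the range, a lift would exist
  have hbnotin : b ∉ LinearMap.range L := by
    rintro ⟨x, hx⟩
    apply hno
    refine ⟨fun v => {e' | e' ∈ A.incidenceSet (φ v) ∧ x (v, e') = 1},
      fun v e' he' => he'.1, ?_, ?_⟩
    · intro v
      have h1 : (∑ e ∈ inc v, x (v, e)) = (if φ v = u₀ then 1 else 0) :=
        congrFun hx (Sum.inl v)
      have h2 : ((({e' | e' ∈ A.incidenceSet (φ v) ∧ x (v, e') = 1}).ncard : ℕ) : ZMod 2)
          = (if φ v = u₀ then 1 else 0) := by
        rw [← h1, zmod2_sum_eq_card]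
        congr 2
        rw [ncard_eq_filter_card]
        congr 1
        rw [hinc, Finset.filter_filter]
      by_cases hv : φ v = u₀
      · rw [if_pos hv] at h2
        constructor
        · intro hev
          rw [(ZMod.natCast_eq_zero_iff_even).mpr hev] at h2
          exact absurd h2.symm one_ne_zero
        · intro hc
          exact absurd (Set.mem_singleton_iff.mpr hv) hc
      · rw [if_neg hv] at h2
        simp only [Set.mem_singleton_iff]
        exact iff_of_true (ZMod.natCast_eq_zero_iff_even.mp h2) hv
    · intro u v hadj
      have h2 : (if T.Adj u v then x (u, s(φ u, φ v)) + x (v, s(φ u, φ v)) else 0) =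
          (0 : ZMod 2) := congrFun hx (Sum.inr (Sum.inl (u, v)))
      rw [if_pos hadj] at h2
      have hxeq := zmod2_eq_of_add_eq_zero _ _ h2
      have hAadj : A.Adj (φ u) (φ v) := hφ hadj
      have hincl : s(φ u, φ v) ∈ A.incidenceSet (φ u) :=
        ⟨(SimpleGraph.mem_edgeSet A).mpr hAadj, Sym2.mem_mk_left _ _⟩
      have hincr : s(φ u, φ v) ∈ A.incidenceSet (φ v) :=
        ⟨(SimpleGraph.mem_edgeSet A).mpr hAadj, Sym2.mem_mk_right _ _⟩
      rw [Set.mem_symmDiff]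
      push_neg
      constructor
      · rintro ⟨-, hx1⟩
        exact ⟨hincr, hxeq ▸ hx1⟩
      · rintro ⟨-, hx1⟩
        exact ⟨hincl, hxeq.symm ▸ hx1⟩
  obtain ⟨g, hg0, hgb⟩ := exists_dual (LinearMap.range L) b hbnotin
  set bY : (VT ⊕ ((VT × VT) ⊕ (VT × Sym2 VA))) →
      ((VT ⊕ ((VT × VT) ⊕ (VT × Sym2 VA))) → ZMod 2) :=
    fun i j => if i = j then 1 else 0 with hbY
  set Wf : VT → ZMod 2 := fun v => g (bY (Sum.inl v)) with hWf
  set dD : VT × VT → ZMod 2 := fun p => g (bY (Sum.inr (Sum.inl p))) with hdD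
  set μf : VT × Sym2 VA → ZMod 2 := fun p => g (bY (Sum.inr (Sum.inr p))) with hμf
  have hgy : ∀ y : (VT ⊕ ((VT × VT) ⊕ (VT × Sym2 VA))) → ZMod 2,
      g y = (∑ v : VT, y (Sum.inl v) * Wf v)
        + ((∑ p : VT × VT, y (Sum.inr (Sum.inl p)) * dD p)
        + (∑ p : VT × Sym2 VA, y (Sum.inr (Sum.inr p)) * μf p)) := by
    intro y
    conv_lhs => rw [pi_eq_sum_univ y]
    rw [map_sum, Fintype.sum_sum_type, Fintype.sum_sum_type]
    simp only [map_smul, smul_eq_mul]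
    rfl
  set bX : (VT × Sym2 VA) → ((VT × Sym2 VA) → ZMod 2) :=
    fun p q => if p = q then 1 else 0 with hbX
  have hLzero : ∀ p : VT × Sym2 VA, g (Lf (bX p)) = 0 := by
    intro p
    exact hg0 _ ⟨bX p, rfl⟩
  have hmain : ∀ (v : VT) (e : Sym2 VA), e ∈ A.incidenceSet (φ v) →
      Wf v = ∑ c : VT,
        (if T.Adj v c ∧ s(φ v, φ c) = e then dD (v, c) + dD (c, v) else 0) := by
    intro v e he
    have h0 := hLzero (v, e)
    rw [hgy] at h0
    have hS1 : (∑ w : VT, Lf (bX (v, e)) (Sum.inl w) * Wf w) = Wf v := by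
      have hterm : ∀ w : VT, Lf (bX (v, e)) (Sum.inl w) * Wf w
          = if w = v then Wf w else 0 := by
        intro w
        simp only [hLf, Sum.elim_inl]
        by_cases hw : w = v
        · subst hw
          rw [if_pos rfl]
          have hsum : (∑ e' ∈ inc w, bX (w, e) (w, e')) = 1 := by
            have hcng : ∀ e' ∈ inc w, bX (w, e) (w, e') = if e = e' then 1 else 0 := by
              intro e' _
              simp only [hbX, Prod.mk.injEq]
              by_cases h : e = e' <;> simp [h]
            rw [Finset.sum_congr rfl hcng, Finset.sum_ite_eq, if_pos]
            rw [hinc]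
            simp only [Finset.mem_filter, Finset.mem_univ, true_and]
            exact he
          rw [hsum, one_mul]
        · rw [if_neg hw]
          have hsum : (∑ e' ∈ inc w, bX (v, e) (w, e')) = 0 := by
            apply Finset.sum_eq_zero
            intro e' _
            simp only [hbX]
            rw [if_neg]
            intro hc
            exact hw (congrArg Prod.fst hc).symm
          rw [hsum, zero_mul]
      rw [Finset.sum_congr rfl (fun w _ => hterm w), Finset.sum_ite_eq' Finset.univ v Wf,
        if_pos (Finset.mem_univ v)]
    have hS3 : (∑ p : VT × Sym2 VA, Lf (bX (v, e)) (Sum.inr (Sum.inr p)) * μf p) = 0 := by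
      apply Finset.sum_eq_zero
      rintro ⟨w, e'⟩ -
      simp only [hLf, Sum.elim_inr]
      by_cases hw : e' ∈ A.incidenceSet (φ w)
      · rw [if_pos hw, zero_mul]
      · rw [if_neg hw]
        have hz : bX (v, e) (w, e') = 0 := by
          simp only [hbX]
          rw [if_neg]
          intro hc
          apply hw
          have hc1 : v = w := congrArg Prod.fst hc
          have hc2 : e = e' := congrArg Prod.snd hc
          rw [← hc2, ← hc1]
          exact he
        rw [hz, zero_mul]
    have hS2 : (∑ p : VT × VT, Lf (bX (v, e)) (Sum.inr (Sum.inl p)) * dD p)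
        = ∑ c : VT,
          (if T.Adj v c ∧ s(φ v, φ c) = e then dD (v, c) + dD (c, v) else 0) := by
      have hterm : ∀ p : VT × VT, Lf (bX (v, e)) (Sum.inr (Sum.inl p)) * dD p
          = (if T.Adj p.1 p.2 then
              (if (v, e) = (p.1, s(φ p.1, φ p.2)) then dD p else 0) else 0)
          + (if T.Adj p.1 p.2 then
              (if (v, e) = (p.2, s(φ p.1, φ p.2)) then dD p else 0) else 0) := by
        rintro ⟨a, c⟩
        simp only [hLf, Sum.elim_inr, Sum.elim_inl, hbX]
        by_cases h1 : T.Adj a c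
        · rw [if_pos h1, if_pos h1, if_pos h1]
          split_ifs <;> ring
        · rw [if_neg h1, if_neg h1, if_neg h1, zero_mul, add_zero]
      rw [Finset.sum_congr rfl (fun p _ => hterm p), Finset.sum_add_distrib]
      have hX : (∑ p : VT × VT, (if T.Adj p.1 p.2 then
          (if (v, e) = (p.1, s(φ p.1, φ p.2)) then dD p else 0) else 0))
          = ∑ c : VT, (if T.Adj v c ∧ s(φ v, φ c) = e then dD (v, c) else 0) := by
        rw [Fintype.sum_prod_type]
        dsimp only
        rw [Finset.sum_eq_single_of_mem v (Finset.mem_univ v)]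
        · apply Finset.sum_congr rfl
          intro c _
          by_cases h1 : T.Adj v c
          · rw [if_pos h1]
            by_cases h2 : s(φ v, φ c) = e
            · rw [if_pos (show (v, e) = (v, s(φ v, φ c)) by rw [h2]), if_pos ⟨h1, h2⟩]
            · rw [if_neg, if_neg (fun hc => h2 hc.2)]
              intro hc
              exact h2 (congrArg Prod.snd hc).symm
          · rw [if_neg h1, if_neg (fun hc => h1 hc.1)]
        · intro a _ ha
          apply Finset.sum_eq_zero
          intro c _
          by_cases h1 : T.Adj a c
          · rw [if_pos h1, if_neg]
            intro hc
            exact ha (congrArg Prod.fst hc).symm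
          · rw [if_neg h1]
      have hY : (∑ p : VT × VT, (if T.Adj p.1 p.2 then
          (if (v, e) = (p.2, s(φ p.1, φ p.2)) then dD p else 0) else 0))
          = ∑ c : VT, (if T.Adj v c ∧ s(φ v, φ c) = e then dD (c, v) else 0) := by
        rw [Fintype.sum_prod_type]
        dsimp only
        have hinner : ∀ a : VT, (∑ c : VT, (if T.Adj a c then
            (if (v, e) = (c, s(φ a, φ c)) then dD (a, c) else 0) else 0))
            = (if T.Adj v a ∧ s(φ v, φ a) = e then dD (a, v) else 0) := by
          intro a
          rw [Finset.sum_eq_single_of_mem v (Finset.mem_univ v)]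
          · by_cases h1 : T.Adj a v
            · rw [if_pos h1]
              by_cases h2 : s(φ v, φ a) = e
              · have h3 : s(φ a, φ v) = e := by
                  rw [Sym2.eq_swap]
                  exact h2
                rw [if_pos (show (v, e) = (v, s(φ a, φ v)) by rw [h3]),
                  if_pos ⟨h1.symm, h2⟩]
              · rw [if_neg, if_neg (fun hc => h2 hc.2)]
                intro hc
                apply h2
                have hc2 : e = s(φ a, φ v) := congrArg Prod.snd hc
                rw [hc2]
                exact (Sym2.eq_swap).symm
            · rw [if_neg h1, if_neg (fun hc => h1 hc.1.symm)]
          · intro c _ hc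
            by_cases h1 : T.Adj a c
            · rw [if_pos h1, if_neg]
              intro hcc
              exact hc (congrArg Prod.fst hcc).symm
            · rw [if_neg h1]
        rw [Finset.sum_congr rfl (fun a _ => hinner a)]
      rw [hX, hY, ← Finset.sum_add_distrib]
      apply Finset.sum_congr rfl
      intro c _
      split_ifs <;> simp
    rw [hS1, hS2, hS3, add_zero] at h0
    exact zmod2_eq_of_add_eq_zero _ _ h0
  -- construct the certificate
  refine ⟨{w | Wf w = 1}, {d | ∃ a c, d = s(a, c) ∧ T.Adj a c ∧ dD (a, c) + dD (c, a) = 1},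
    ?_, ?_⟩
  · intro v _ g' _ hadj
    have he : s(φ v, g') ∈ A.incidenceSet (φ v) :=
      ⟨(SimpleGraph.mem_edgeSet A).mpr hadj, Sym2.mem_mk_left _ _⟩
    have heq := hmain v (s(φ v, g')) he
    have hterm : ∀ c : VT,
        (if T.Adj v c ∧ s(φ v, φ c) = s(φ v, g') then dD (v, c) + dD (c, v) else 0)
        = (if (c ∈ Set.univ ∧ T.Adj v c ∧ s(v, c) ∈
            {d | ∃ a c', d = s(a, c') ∧ T.Adj a c' ∧ dD (a, c') + dD (c', a) = 1} ∧ φ c = g')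
            then (1 : ZMod 2) else 0) := by
      intro c
      by_cases h1 : T.Adj v c ∧ φ c = g'
      · rw [if_pos ⟨h1.1, by rw [h1.2]⟩]
        rcases zmod2_cases (dD (v, c) + dD (c, v)) with h2 | h2
        · rw [h2, if_neg]
          rintro ⟨-, -, ⟨a, c', hd, -, hsum⟩, -⟩
          rcases Sym2.eq_iff.mp hd with ⟨rfl, rfl⟩ | ⟨rfl, rfl⟩
          · rw [hsum] at h2
            exact one_ne_zero h2
          · rw [add_comm] at h2
            rw [hsum] at h2
            exact one_ne_zero h2
        · rw [h2, if_pos]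
          exact ⟨trivial, h1.1, ⟨v, c, rfl, h1.1, h2⟩, h1.2⟩
      · rw [if_neg, if_neg]
        · intro hc
          exact h1 ⟨hc.2.1, hc.2.2.2⟩
        · intro hc
          exact h1 ⟨hc.1, Sym2.congr_right.mp hc.2⟩
    rw [Finset.sum_congr rfl (fun c _ => hterm c)] at heq
    rw [Finset.sum_boole] at heq
    have hcard : certDeg T φ
        {d | ∃ a c', d = s(a, c') ∧ T.Adj a c' ∧ dD (a, c') + dD (c', a) = 1}
        Set.univ v g' = (Finset.univ.filter (fun c => c ∈ Set.univ ∧ T.Adj v c ∧ s(v, c) ∈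
          {d | ∃ a c', d = s(a, c') ∧ T.Adj a c' ∧ dD (a, c') + dD (c', a) = 1} ∧
          φ c = g')).card := by
      rw [certDeg, ncard_eq_filter_card]
    rw [← hcard] at heq
    rw [Set.mem_setOf_eq, ← ZMod.natCast_eq_one_iff_odd, ← heq]
  · have hgb2 := hgy b
    rw [hgb] at hgb2
    have hz2 : (∑ p : VT × VT, b (Sum.inr (Sum.inl p)) * dD p) = 0 := by
      apply Finset.sum_eq_zero
      intro p _
      simp only [hb, Sum.elim_inr]
      rw [zero_mul]
    have hz3 : (∑ p : VT × Sym2 VA, b (Sum.inr (Sum.inr p)) * μf p) = 0 := by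
      apply Finset.sum_eq_zero
      intro p _
      simp only [hb, Sum.elim_inr]
      rw [zero_mul]
    rw [hz2, hz3, add_zero, add_zero] at hgb2
    have hterm : ∀ w : VT, b (Sum.inl w) * Wf w
        = (if (w ∈ Set.univ ∧ w ∈ {w | Wf w = 1} ∧ φ w = u₀) then (1 : ZMod 2) else 0) := by
      intro w
      simp only [hb, Sum.elim_inl, Set.mem_setOf_eq]
      by_cases h1 : φ w = u₀
      · rw [if_pos h1, one_mul]
        rcases zmod2_cases (Wf w) with h2 | h2
        · rw [if_neg]
          · exact h2
          · rintro ⟨-, hw, -⟩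
            rw [hw] at h2
            exact one_ne_zero h2
        · rw [if_pos ⟨trivial, h2, h1⟩]
          exact h2
      · rw [if_neg h1, zero_mul, if_neg (fun hc => h1 hc.2.2)]
    rw [Finset.sum_congr rfl (fun w _ => hterm w), Finset.sum_boole] at hgb2
    rw [nOn, ← ZMod.natCast_eq_one_iff_odd, ncard_eq_filter_card, ← hgb2]
theorem homCount_equiv {α β γ : Type*} (F : SimpleGraph α) (X : SimpleGraph β) (e : β ≃ γ) :
    homCount F X = homCount F (X.comap e.symm) := by
  rw [homCount_eq_card, homCount_eq_card]
  apply Nat.card_congr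
  refine ⟨fun f => ⟨fun v => e (f.1 v), ?_⟩, fun g => ⟨fun v => e.symm (g.1 v), ?_⟩, ?_, ?_⟩
  · intro u v hadj
    show X.Adj (e.symm (e (f.1 u))) (e.symm (e (f.1 v)))
    simpa using f.2 hadj
  · intro u v hadj
    exact g.2 hadj
  · intro f
    apply Subtype.ext
    funext v
    simp
  · intro g
    apply Subtype.ext
    funext v
    simp

end TDC

/-- For `q ≥ 1`, the class `TD_q` of graphs of treedepth at most `q` is
homomorphism distinguishing closed. -/
theorem td_closed (q : ℕ) (hq : 1 ≤ q) : hdCl (TDclass q) = TDclass q := by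
  apply Set.Subset.antisymm
  · intro A hA
    by_contra hAtd
    have hAtd' : ¬ TDC.CoverOn A.2 Set.univ q := fun hc =>
      hAtd ((TDC.hasForestCover_iff_coverOn _ _).mpr hc)
    have hcomp : ∃ u₀ : Fin A.1, ¬ TDC.CoverOn A.2 (TDC.compS A.2 Set.univ u₀) q := by
      by_contra hall
      push_neg at hall
      exact hAtd' (TDC.glueCover (fun v _ => hall v))
    obtain ⟨u₀, hu₀⟩ := hcomp
    classical
    letI : Fintype (CFIvert A.2 (∅ : Set (Fin A.1))) := Fintype.ofFinite _
    letI : Fintype (CFIvert A.2 ({u₀} : Set (Fin A.1))) := Fintype.ofFinite _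
    set e₀ := Fintype.equivFin (CFIvert A.2 (∅ : Set (Fin A.1))) with he₀
    set e₁ := Fintype.equivFin (CFIvert A.2 ({u₀} : Set (Fin A.1))) with he₁
    set G : GraphB := ⟨_, (CFI A.2 ∅).comap e₀.symm⟩ with hG
    set H : GraphB := ⟨_, (CFI A.2 {u₀}).comap e₁.symm⟩ with hH
    have hlift : ∀ (m : ℕ) (T : SimpleGraph (Fin m)), TDC.CoverOn T Set.univ q →
        ∀ φ ∈ TDC.HomSet T A.2, ∃ S, TDC.IsLift T A.2 {u₀} φ S := by
      intro m T hcov φ hφ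
      by_contra hno
      obtain ⟨W, D, hcert, hodd⟩ := TDC.cert_of_no_lift T A.2 u₀ φ hφ hno
      exact hu₀ (TDC.certLemma T A.2 φ q W D Set.univ Set.univ u₀
        (fun v _ => trivial) (fun v _ u _ _ => trivial) hcert trivial hodd hcov)
    have hindist : HomIndist (TDclass q) G.2 H.2 := by
      intro T hT
      have hcov : TDC.CoverOn T.2 Set.univ q := (TDC.hasForestCover_iff_coverOn _ _).mp hT
      calc homCount T.2 G.2 = homCount T.2 (CFI A.2 ∅) :=
            (TDC.homCount_equiv T.2 (CFI A.2 ∅) e₀).symm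
        _ = homCount T.2 (CFI A.2 {u₀}) :=
            TDC.homCount_CFI_twist T.2 A.2 {u₀} (hlift T.1 T.2 hcov)
        _ = homCount T.2 H.2 := TDC.homCount_equiv T.2 (CFI A.2 {u₀}) e₁
    have heq := hA G H hindist
    have hlt := TDC.homCount_CFI_lt A.2 u₀
    rw [TDC.homCount_equiv A.2 (CFI A.2 ∅) e₀,
      TDC.homCount_equiv A.2 (CFI A.2 {u₀}) e₁] at hlt
    change homCount A.2 ((CFI A.2 ∅).comap e₀.symm) =
      homCount A.2 ((CFI A.2 {u₀}).comap e₁.symm) at heq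
    omega
  · intro A hA G H hindist
    exact hindist A hA
end

section
/- Let k, q ≥ 1 and let G be a finite simple graph. Cops has a winning strategy in the monotone q-round k-cops-and-robber game monCR^k_q(G) if and only if G ∈ T^k_q, i.e. G admits a k-pebble forest cover of depth at most q. -/
set_option maxHeartbeats 1000000

open Finset in
theorem fin_chain_greatest {n : ℕ} (r : Fin n → Fin n → Prop) (hrefl : ∀ a, r a a)
    (htrans : ∀ a b c, r a b → r b c → r a c) :
    ∀ (s : Finset (Fin n)), (∀ a ∈ s, ∀ b ∈ s, r a b ∨ r b a) → s.Nonempty →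
    ∃ g ∈ s, ∀ u ∈ s, r u g := by
  intro s
  induction s using Finset.induction_on with
  | empty => intro _ h; simp at h
  | insert a s hx ih =>
    intro hc _
    by_cases hs : s.Nonempty
    · obtain ⟨g, hg, hgmax⟩ :=
        ih (fun x hx y hy => hc x (mem_insert_of_mem hx) y (mem_insert_of_mem hy)) hs
      rcases hc a (mem_insert_self _ _) g (mem_insert_of_mem hg) with h | h
      · refine ⟨g, mem_insert_of_mem hg, ?_⟩
        intro u hu
        rcases mem_insert.1 hu with rfl | hu
        · exact h
        · exact hgmax u hu
      · refine ⟨a, mem_insert_self _ _, ?_⟩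
        intro u hu
        rcases mem_insert.1 hu with rfl | hu
        · exact hrefl u
        · exact htrans _ _ _ (hgmax u hu) h
    · have : s = ∅ := Finset.not_nonempty_iff_eq_empty.1 hs
      subst this
      refine ⟨a, mem_insert_self _ _, ?_⟩
      intro u hu
      rcases mem_insert.1 hu with rfl | hu
      · exact hrefl u
      · simp at hu

namespace MonCR

variable {n k q : ℕ} {G : SimpleGraph (Fin n)}

/-! robber-move utilities -/

theorem rm_anti {A B : Finset (Fin n ⊕ Fin k)} (hAB : A ⊆ B) {v u : Fin n} :
    RobberMove G B v u → RobberMove G A v u := by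
  rintro ⟨w, hw⟩
  exact ⟨w, fun x hx hxA => hw x hx (hAB hxA)⟩

section Forward

variable (P : PebbleForestCover G k q)

open Classical in
noncomputable def gset (a : Fin n) (p : Fin k) : Finset (Fin n) :=
  Finset.univ.filter (fun u => P.le u a ∧ P.peb u = p)

theorem mem_gset {a : Fin n} {p : Fin k} {u : Fin n} :
    u ∈ gset P a p ↔ P.le u a ∧ P.peb u = p := by
  classical
  simp [gset]

open Classical in
noncomputable def cpos (a : Fin n) (p : Fin k) : Fin n ⊕ Fin k :=
  if h : ∃ g ∈ gset P a p, ∀ u ∈ gset P a p, P.le u g then Sum.inl h.choose else Sum.inr p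

theorem cpos_eq_inl {a : Fin n} {p : Fin k} {g : Fin n} (hg : g ∈ gset P a p)
    (hmax : ∀ u ∈ gset P a p, P.le u g) : cpos P a p = Sum.inl g := by
  have h : ∃ g ∈ gset P a p, ∀ u ∈ gset P a p, P.le u g := ⟨g, hg, hmax⟩
  rw [cpos, dif_pos h]
  obtain ⟨hg', hmax'⟩ := h.choose_spec
  exact congrArg Sum.inl (P.le_antisymm _ _ (hmax _ hg') (hmax' _ hg))

theorem cpos_inl_spec {a : Fin n} {p : Fin k} {g : Fin n} (h : cpos P a p = Sum.inl g) :
    g ∈ gset P a p ∧ ∀ u ∈ gset P a p, P.le u g := by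
  rw [cpos] at h
  split at h
  · rename_i hex
    obtain ⟨hg', hmax'⟩ := hex.choose_spec
    cases h
    exact ⟨hg', hmax'⟩
  · cases h

theorem cpos_inj (a : Fin n) : Function.Injective (cpos P a) := by
  intro p₁ p₂ h
  rcases h1 : cpos P a p₁ with g₁ | p₁'
  · rcases h2 : cpos P a p₂ with g₂ | p₂'
    · rw [h1, h2] at h
      cases h
      have e1 := (mem_gset P).1 (cpos_inl_spec P h1).1
      have e2 := (mem_gset P).1 (cpos_inl_spec P h2).1
      rw [← e1.2, ← e2.2]
    · rw [h1, h2] at h; cases h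
  · rcases h2 : cpos P a p₂ with g₂ | p₂'
    · rw [h1, h2] at h; cases h
    · have e1 : p₁' = p₁ := by
        rw [cpos] at h1; split at h1
        · cases h1
        · cases h1; rfl
      have e2 : p₂' = p₂ := by
        rw [cpos] at h2; split at h2
        · cases h2
        · cases h2; rfl
      rw [h1, h2] at h
      cases h
      rw [← e1, ← e2]

theorem walk_stays {A : Finset (Fin n ⊕ Fin k)} {next : Fin n}
    (hA : ∀ x y, G.Adj x y → P.le next x → ¬ P.le next y → Sum.inl y ∈ A) :
    ∀ {v u : Fin n} (w : G.Walk v u), (∀ x ∈ w.support, Sum.inl x ∉ A) → P.le next v →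
      ∀ x ∈ w.support, P.le next x := by
  intro v u w
  induction w with
  | nil =>
    intro _ hv x hx
    rw [SimpleGraph.Walk.support_nil, List.mem_singleton] at hx
    subst hx; exact hv
  | cons hadj w ih =>
    rename_i a b c
    intro hsup hv x hx
    rw [SimpleGraph.Walk.support_cons, List.mem_cons] at hx
    have hb : P.le next b := by
      by_contra hnb
      exact hsup _ (by rw [SimpleGraph.Walk.support_cons]; exact List.mem_cons_of_mem _ w.start_mem_support)
        (hA a b hadj hv hnb)
    rcases hx with rfl | hx
    · exact hv
    · exact ih (fun y hy => hsup y (by rw [SimpleGraph.Walk.support_cons]; exact List.mem_cons_of_mem _ hy)) hb x hx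

end Forward

end MonCR
namespace MonCR

variable {n k q : ℕ} {G : SimpleGraph (Fin n)}

theorem Mstep (P : PebbleForestCover G k q) :
    ∀ (q' : ℕ) (a₀ v : Fin n), P.le a₀ v → a₀ ≠ v →
    q ≤ q' + Set.ncard {u | P.le u a₀} →
    MonCopsCatch G k q' (Finset.univ.image (cpos P a₀)) v := by
  intro q'
  induction q' with
  | zero =>
    intro a₀ v hle hne hcard
    exfalso
    have h2 : v ∉ {u | P.le u a₀} := fun hv => hne (P.le_antisymm _ _ hle hv)
    have h4 : Set.ncard (insert v {u | P.le u a₀}) = Set.ncard {u | P.le u a₀} + 1 :=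
      Set.ncard_insert_of_notMem h2 (Set.toFinite _)
    have h1 : insert v {u | P.le u a₀} ⊆ {u | P.le u v} := by
      intro x hx
      rcases Set.mem_insert_iff.1 hx with rfl | hx
      · exact P.le_refl x
      · exact P.le_trans _ _ _ hx hle
    have h5 := Set.ncard_le_ncard h1 (Set.toFinite _)
    have h3 := P.heightLE v
    omega
  | succ q'' ih =>
    intro a₀ v hle hne hcard
    classical
    have hvR : P.le v v ∧ ¬ P.le v a₀ :=
      ⟨P.le_refl v, fun hv => hne (P.le_antisymm _ _ hle hv)⟩
    obtain ⟨next, hnextR, hleast⟩ := fin_chain_greatest (fun a b => P.le b a) P.le_refl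
      (fun a b c hab hbc => P.le_trans _ _ _ hbc hab)
      (Finset.univ.filter (fun u => P.le u v ∧ ¬ P.le u a₀))
      (fun a ha b hb => by
        rw [Finset.mem_filter] at ha hb
        rcases P.downChain a b v ha.2.1 hb.2.1 with h | h
        · exact Or.inr h
        · exact Or.inl h)
      ⟨v, by rw [Finset.mem_filter]; exact ⟨Finset.mem_univ _, hvR⟩⟩
    rw [Finset.mem_filter] at hnextR
    obtain ⟨-, hnv, hna⟩ := hnextR
    have hleast' : ∀ u, P.le u v → ¬ P.le u a₀ → P.le next u := fun u h1 h2 =>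
      hleast u (by rw [Finset.mem_filter]; exact ⟨Finset.mem_univ _, h1, h2⟩)
    have hanv : P.le a₀ next := by
      rcases P.downChain a₀ next v hle hnv with h | h
      · exact h
      · exact absurd h hna
    have himm : ∀ u, P.le u next → u = next ∨ P.le u a₀ := by
      intro u hu
      by_cases h : P.le u a₀
      · exact Or.inr h
      · exact Or.inl (P.le_antisymm _ _ hu (hleast' u (P.le_trans _ _ _ hu hnv) h))
    have hnext_gset : next ∈ gset P next (P.peb next) := (mem_gset P).2 ⟨P.le_refl next, rfl⟩
    have hgmax : ∀ u ∈ gset P next (P.peb next), P.le u next := fun u hu => ((mem_gset P).1 hu).1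
    have hposp : cpos P next (P.peb next) = Sum.inl next := cpos_eq_inl P hnext_gset hgmax
    have hgeq : ∀ p' : Fin k, p' ≠ P.peb next → gset P next p' = gset P a₀ p' := by
      intro p' hp'
      ext u
      rw [mem_gset, mem_gset]
      constructor
      · rintro ⟨h1, h2⟩
        rcases himm u h1 with rfl | h3
        · exact absurd h2.symm hp'
        · exact ⟨h3, h2⟩
      · rintro ⟨h1, h2⟩
        exact ⟨P.le_trans _ _ _ h1 hanv, h2⟩
    have hposeq : ∀ p' : Fin k, p' ≠ P.peb next → cpos P next p' = cpos P a₀ p' := by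
      intro p' hp'
      rw [cpos, cpos, hgeq p' hp']
    have hXY : (Finset.univ.image (cpos P a₀)) ∩ (Finset.univ.image (cpos P next))
        = Finset.image (cpos P next) (Finset.univ.erase (P.peb next)) := by
      ext z
      simp only [Finset.mem_inter, Finset.mem_image, Finset.mem_erase, Finset.mem_univ,
        true_and, and_true]
      constructor
      · rintro ⟨⟨p₁, hp₁⟩, ⟨p₂, hp₂⟩⟩
        refine ⟨p₂, ?_, hp₂⟩
        rintro rfl
        rw [hposp] at hp₂
        rw [← hp₂] at hp₁
        obtain ⟨hg, -⟩ := cpos_inl_spec P hp₁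
        exact hna ((mem_gset P).1 hg).1
      · rintro ⟨p', hp', hz⟩
        exact ⟨⟨p', by rw [← hposeq p' hp']; exact hz⟩, ⟨p', hz⟩⟩
    have hYcard : (Finset.univ.image (cpos P next)).card = k := by
      rw [Finset.card_image_of_injective _ (cpos_inj P next), Finset.card_univ]
      simp
    have hXYcard : ((Finset.univ.image (cpos P a₀)) ∩ (Finset.univ.image (cpos P next))).card
        = k - 1 := by
      rw [hXY, Finset.card_image_of_injective _ (cpos_inj P next),
        Finset.card_erase_of_mem (Finset.mem_univ _), Finset.card_univ]
      simp
    have hblock : ∀ x y, G.Adj x y → P.le next x → ¬ P.le next y →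
        Sum.inl y ∈ (Finset.univ.image (cpos P a₀)) ∩ (Finset.univ.image (cpos P next)) := by
      intro x y hadj hnx hny
      have hyx : P.le y x := by
        rcases P.cover hadj with h | h
        · exact absurd (P.le_trans _ _ _ hnx h) hny
        · exact h
      have hynext : P.le y next := by
        rcases P.downChain y next x hyx hnx with h | h
        · exact h
        · exact absurd h hny
      have hyne : y ≠ next := by rintro rfl; exact hny (P.le_refl y)
      have hyv : P.le y v := P.le_trans _ _ _ hynext hnv
      by_cases hya : P.le y a₀
      · have hpy : P.peb y ≠ P.peb next := P.pebbleCond hadj.symm hyx hynext hnx hyne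
        have hgy : y ∈ gset P next (P.peb y) := (mem_gset P).2 ⟨hynext, rfl⟩
        have hgymax : ∀ u ∈ gset P next (P.peb y), P.le u y := by
          intro u hu
          obtain ⟨hun, hupeb⟩ := (mem_gset P).1 hu
          by_contra huy
          have hyu : P.le y u := by
            rcases P.downChain u y next hun hynext with h | h
            · exact absurd h huy
            · exact h
          have hune : y ≠ u := by rintro rfl; exact huy (P.le_refl y)
          exact (P.pebbleCond hadj.symm hyx hyu (P.le_trans _ _ _ hun hnx) hune) hupeb.symm
        have hce : cpos P next (P.peb y) = Sum.inl y := cpos_eq_inl P hgy hgymax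
        rw [hXY]
        exact Finset.mem_image.2 ⟨P.peb y, Finset.mem_erase.2 ⟨hpy, Finset.mem_univ _⟩, hce⟩
      · exact absurd (hleast' y hyv hya) hny
    refine ⟨Finset.univ.image (cpos P next), hYcard, hXYcard, ?_, ?_⟩
    · rintro u ⟨w, hw⟩
      have hall := walk_stays P hblock w hw hnv
      refine ⟨w, ?_⟩
      intro x hx hxX
      obtain ⟨p₁, -, hp₁⟩ := Finset.mem_image.1 hxX
      obtain ⟨hg, -⟩ := cpos_inl_spec P hp₁
      exact hna (P.le_trans _ _ _ (hall x hx) ((mem_gset P).1 hg).1)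
    · rintro u ⟨w, hw⟩
      have hall := walk_stays P hblock w hw hnv
      have hnu : P.le next u := hall u w.end_mem_support
      by_cases hue : u = next
      · subst hue
        exact Or.inl (Finset.mem_image.2 ⟨P.peb u, Finset.mem_univ _, hposp⟩)
      · refine Or.inr (ih next u hnu (fun h => hue h.symm) ?_)
        have hanc : {u' | P.le u' next} = insert next {u' | P.le u' a₀} := by
          ext x
          simp only [Set.mem_setOf_eq, Set.mem_insert_iff]
          constructor
          · intro hx
            exact himm x hx
          · rintro (rfl | hx)
            · exact P.le_refl x
            · exact P.le_trans _ _ _ hx hanv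
        have hcard2 : Set.ncard {u' | P.le u' next} = Set.ncard {u' | P.le u' a₀} + 1 := by
          rw [hanc]
          exact Set.ncard_insert_of_notMem hna (Set.toFinite _)
        omega

end MonCR
namespace MonCR

variable {n k q : ℕ} {G : SimpleGraph (Fin n)}

theorem pfc_to_win (P : PebbleForestCover G k q) (hk : 1 ≤ k) (hq : 1 ≤ q) :
    MonCopsWinGame G k q := by
  obtain ⟨q'', rfl⟩ : ∃ q'', q = q'' + 1 := ⟨q - 1, by omega⟩
  intro v
  classical
  obtain ⟨next, hnextR, hleast⟩ := fin_chain_greatest (fun a b => P.le b a) P.le_refl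
    (fun a b c hab hbc => P.le_trans _ _ _ hbc hab)
    (Finset.univ.filter (fun u => P.le u v))
    (fun a ha b hb => by
      rw [Finset.mem_filter] at ha hb
      rcases P.downChain a b v ha.2 hb.2 with h | h
      · exact Or.inr h
      · exact Or.inl h)
    ⟨v, by simp [P.le_refl v]⟩
  rw [Finset.mem_filter] at hnextR
  have hnv : P.le next v := hnextR.2
  have hleast' : ∀ u, P.le u v → P.le next u := fun u h =>
    hleast u (by rw [Finset.mem_filter]; exact ⟨Finset.mem_univ _, h⟩)
  have hempty : ∀ p' : Fin k, p' ≠ P.peb next → gset P next p' = ∅ := by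
    intro p' hp'
    rw [Finset.eq_empty_iff_forall_notMem]
    intro u hu
    obtain ⟨h1, h2⟩ := (mem_gset P).1 hu
    have hun : u ≠ next := fun h => hp' (by rw [← h2, h])
    exact hun (P.le_antisymm _ _ h1 (hleast' u (P.le_trans _ _ _ h1 hnv)))
  have hposr : ∀ p' : Fin k, p' ≠ P.peb next → cpos P next p' = Sum.inr p' := by
    intro p' hp'
    rw [cpos, dif_neg]
    rintro ⟨g, hg, -⟩
    rw [hempty p' hp'] at hg
    simp at hg
  have hposp : cpos P next (P.peb next) = Sum.inl next :=
    cpos_eq_inl P ((mem_gset P).2 ⟨P.le_refl next, rfl⟩) (fun u hu => ((mem_gset P).1 hu).1)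
  have hXY : initPos (Fin n) k ∩ (Finset.univ.image (cpos P next))
      = Finset.image Sum.inr (Finset.univ.erase (P.peb next)) := by
    ext z
    simp only [initPos, Finset.mem_inter, Finset.mem_image, Finset.mem_erase, Finset.mem_univ,
      true_and, and_true]
    constructor
    · rintro ⟨⟨c, hc⟩, ⟨p₂, hp₂⟩⟩
      by_cases hpp : p₂ = P.peb next
      · subst hpp
        rw [hposp] at hp₂
        rw [← hp₂] at hc
        cases hc
      · rw [hposr p₂ hpp] at hp₂
        exact ⟨p₂, hpp, hp₂⟩
    · rintro ⟨p', hp', hz⟩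
      exact ⟨⟨p', hz⟩, ⟨p', by rw [hposr p' hp']; exact hz⟩⟩
  have hYcard : (Finset.univ.image (cpos P next)).card = k := by
    rw [Finset.card_image_of_injective _ (cpos_inj P next), Finset.card_univ]
    simp
  have hXYcard : (initPos (Fin n) k ∩ (Finset.univ.image (cpos P next))).card = k - 1 := by
    rw [hXY, Finset.card_image_of_injective _ Sum.inr_injective,
      Finset.card_erase_of_mem (Finset.mem_univ _), Finset.card_univ]
    simp
  have hblock : ∀ x y, G.Adj x y → P.le next x → ¬ P.le next y →
      Sum.inl y ∈ initPos (Fin n) k ∩ (Finset.univ.image (cpos P next)) := by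
    intro x y hadj hnx hny
    exfalso
    have hyx : P.le y x := by
      rcases P.cover hadj with h | h
      · exact absurd (P.le_trans _ _ _ hnx h) hny
      · exact h
    have hynext : P.le y next := by
      rcases P.downChain y next x hyx hnx with h | h
      · exact h
      · exact absurd h hny
    exact hny (hleast' y (P.le_trans _ _ _ hynext hnv))
  refine ⟨Finset.univ.image (cpos P next), hYcard, hXYcard, ?_, ?_⟩
  · rintro u ⟨w, hw⟩
    exact ⟨w, fun x hx hxX => by simp [initPos] at hxX⟩
  · rintro u ⟨w, hw⟩
    have hall := walk_stays P hblock w hw hnv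
    have hnu : P.le next u := hall u w.end_mem_support
    by_cases hue : u = next
    · subst hue
      exact Or.inl (Finset.mem_image.2 ⟨P.peb u, Finset.mem_univ _, hposp⟩)
    · refine Or.inr (Mstep P q'' next u hnu (fun h => hue h.symm) ?_)
      have hpos : 0 < Set.ncard {u' | P.le u' next} :=
        (Set.ncard_pos (Set.toFinite _)).2 ⟨next, P.le_refl next⟩
      omega

end MonCR
namespace MonCR

variable {n k q : ℕ} {G : SimpleGraph (Fin n)}

/-- partial pebble forest cover of a region `C`, protected w.r.t. slot assignment `σ`. -/
structure CovS (G : SimpleGraph (Fin n)) (k : ℕ) (σ : Fin k → Fin n ⊕ Fin k)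
    (C : Set (Fin n)) (q' : ℕ) : Type where
  le : Fin n → Fin n → Prop
  peb : Fin n → Fin k
  supp : ∀ a b, le a b → a ∈ C ∧ b ∈ C
  lrefl : ∀ a ∈ C, le a a
  lantisymm : ∀ a b, le a b → le b a → a = b
  ltrans : ∀ a b c, le a b → le b c → le a c
  ldown : ∀ a b c, le a c → le b c → le a b ∨ le b a
  lcover : ∀ a b, G.Adj a b → a ∈ C → b ∈ C → le a b ∨ le b a
  lpeb : ∀ a b c, G.Adj a b → le a b → le a c → le c b → a ≠ c → peb a ≠ peb c
  lht : ∀ b ∈ C, Set.ncard {a | le a b} ≤ q'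
  lprot : ∀ (i : Fin k) (z a b), σ i = Sum.inl z → G.Adj z a → a ∈ C → le b a → peb b ≠ i

theorem rm_symm {A : Finset (Fin n ⊕ Fin k)} {v u : Fin n} :
    RobberMove G A v u → RobberMove G A u v := by
  rintro ⟨w, hw⟩
  refine ⟨w.reverse, ?_⟩
  intro x hx
  rw [SimpleGraph.Walk.support_reverse, List.mem_reverse] at hx
  exact hw x hx

theorem rm_trans {A : Finset (Fin n ⊕ Fin k)} {v u x : Fin n} :
    RobberMove G A v u → RobberMove G A u x → RobberMove G A v x := by
  rintro ⟨w1, h1⟩ ⟨w2, h2⟩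
  refine ⟨w1.append w2, ?_⟩
  intro y hy
  rcases (SimpleGraph.Walk.mem_support_append_iff _ _).1 hy with h | h
  · exact h1 y h
  · exact h2 y h

theorem rm_start {A : Finset (Fin n ⊕ Fin k)} {v u : Fin n} :
    RobberMove G A v u → Sum.inl v ∉ A := fun ⟨w, hw⟩ => hw v w.start_mem_support

theorem rm_end {A : Finset (Fin n ⊕ Fin k)} {v u : Fin n} :
    RobberMove G A v u → Sum.inl u ∉ A := fun ⟨w, hw⟩ => hw u w.end_mem_support

theorem rm_refl {A : Finset (Fin n ⊕ Fin k)} {v : Fin n} (h : Sum.inl v ∉ A) :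
    RobberMove G A v v := by
  refine ⟨SimpleGraph.Walk.nil, ?_⟩
  intro x hx
  rw [SimpleGraph.Walk.support_nil, List.mem_singleton] at hx
  subst hx; exact h

theorem rm_single {A : Finset (Fin n ⊕ Fin k)} {v u : Fin n} (hadj : G.Adj v u)
    (hv : Sum.inl v ∉ A) (hu : Sum.inl u ∉ A) : RobberMove G A v u := by
  refine ⟨SimpleGraph.Walk.cons hadj SimpleGraph.Walk.nil, ?_⟩
  intro x hx
  rw [SimpleGraph.Walk.support_cons, SimpleGraph.Walk.support_nil, List.mem_cons] at hx
  rcases hx with hx | hx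
  · subst hx; exact hv
  · rw [List.mem_singleton] at hx; subst hx; exact hu

def Reach (G : SimpleGraph (Fin n)) (Y : Finset (Fin n ⊕ Fin k)) (v : Fin n) : Set (Fin n) :=
  {u | RobberMove G Y v u}

theorem mem_reach {Y : Finset (Fin n ⊕ Fin k)} {v u : Fin n} :
    u ∈ Reach G Y v ↔ RobberMove G Y v u := Iff.rfl

theorem reach_eq {Y : Finset (Fin n ⊕ Fin k)} {u x : Fin n} (h : x ∈ Reach G Y u) :
    Reach G Y x = Reach G Y u := by
  ext z
  exact ⟨fun hz => rm_trans h hz, fun hz => rm_trans (rm_symm h) hz⟩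

open Classical in
noncomputable def Rep (d : Fin n) (s : Set (Fin n)) : Fin n :=
  if h : ∃ x, x ∈ s then h.choose else d

theorem Rep_mem {d : Fin n} {s : Set (Fin n)} {x : Fin n} (hx : x ∈ s) : Rep d s ∈ s := by
  rw [Rep, dif_pos ⟨x, hx⟩]
  exact Exists.choose_spec (⟨x, hx⟩ : ∃ y, y ∈ s)

def covOfEmpty (σ : Fin k → Fin n ⊕ Fin k) {C : Set (Fin n)} (q' : ℕ) (hk : 1 ≤ k)
    (hC : ∀ a, a ∉ C) : CovS G k σ C q' where
  le _ _ := False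
  peb _ := ⟨0, hk⟩
  supp _ _ h := h.elim
  lrefl a ha := absurd ha (hC a)
  lantisymm _ _ h := h.elim
  ltrans _ _ _ h := h.elim
  ldown _ _ _ h := h.elim
  lcover a _ _ ha _ := absurd ha (hC a)
  lpeb _ _ _ _ h := h.elim
  lht b hb := absurd hb (hC b)
  lprot _ _ a _ _ _ ha := absurd ha (hC a)

theorem reslot {σ σ' : Fin k → Fin n ⊕ Fin k} {C : Set (Fin n)} {q'' : ℕ}
    (D : CovS G k σ' C q'') (i₀ : Fin k) (hσ : ∀ j, j ≠ i₀ → σ' j = σ j)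
    (hi₀ : ∀ z a, σ i₀ = Sum.inl z → G.Adj z a → a ∈ C → False) :
    Nonempty (CovS G k σ C (q'' + 1)) := by
  refine ⟨⟨D.le, D.peb, D.supp, D.lrefl, D.lantisymm, D.ltrans, D.ldown, D.lcover, D.lpeb,
    ?_, ?_⟩⟩
  · intro b hb
    exact le_trans (D.lht b hb) (Nat.le_succ _)
  · intro i z a b hiz hadj ha hba
    by_cases hii : i = i₀
    · exact absurd ha (fun h => hi₀ z a (hii ▸ hiz) hadj h)
    · exact D.lprot i z a b (by rw [hσ i hii]; exact hiz) hadj ha hba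

theorem addRoot {σ σ' : Fin k → Fin n ⊕ Fin k} {C₀ : Set (Fin n)} {q'' : ℕ}
    (D : CovS G k σ' C₀ q'') (y' : Fin n) (hy' : y' ∉ C₀) (i₀ : Fin k)
    (hσi₀ : σ' i₀ = Sum.inl y')
    (hσ : ∀ j, j ≠ i₀ → σ' j = σ j)
    (hvacp : ∀ z a, σ i₀ = Sum.inl z → G.Adj z a → a ∈ insert y' C₀ → False) :
    Nonempty (CovS G k σ (insert y' C₀) (q'' + 1)) := by
  refine ⟨⟨fun a b => (a = y' ∧ b ∈ insert y' C₀) ∨ D.le a b,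
    fun a => if a = y' then i₀ else D.peb a, ?_, ?_, ?_, ?_, ?_, ?_, ?_, ?_, ?_⟩⟩
  · rintro a b (⟨rfl, hb⟩ | h)
    · exact ⟨Set.mem_insert _ _, hb⟩
    · obtain ⟨ha, hb⟩ := D.supp a b h
      exact ⟨Set.mem_insert_of_mem _ ha, Set.mem_insert_of_mem _ hb⟩
  · intro a ha
    rcases Set.mem_insert_iff.1 ha with rfl | ha'
    · exact Or.inl ⟨rfl, ha⟩
    · exact Or.inr (D.lrefl a ha')
  · rintro a b (⟨rfl, hb⟩ | hab) hba
    · rcases hba with ⟨hba, -⟩ | hba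
      · exact hba.symm
      · exact absurd ((D.supp b a hba).2) hy'
    · rcases hba with ⟨rfl, -⟩ | hba
      · exact absurd ((D.supp a b hab).2) hy'
      · exact D.lantisymm a b hab hba
  · rintro a b c (⟨rfl, hb⟩ | hab) hbc
    · refine Or.inl ⟨rfl, ?_⟩
      rcases hbc with ⟨rfl, hc⟩ | hbc
      · exact hc
      · exact Set.mem_insert_of_mem _ (D.supp b c hbc).2
    · rcases hbc with ⟨rfl, hc⟩ | hbc
      · exact absurd ((D.supp a b hab).2) hy'
      · exact Or.inr (D.ltrans a b c hab hbc)
  · rintro a b c (⟨rfl, hc⟩ | hac) hbc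
    · refine Or.inl (Or.inl ⟨rfl, ?_⟩)
      rcases hbc with ⟨rfl, hc2⟩ | hbc
      · exact Set.mem_insert _ _
      · exact Set.mem_insert_of_mem _ (D.supp b c hbc).1
    · rcases hbc with ⟨rfl, hc2⟩ | hbc
      · exact Or.inr (Or.inl ⟨rfl, Set.mem_insert_of_mem _ (D.supp a c hac).1⟩)
      · rcases D.ldown a b c hac hbc with h | h
        · exact Or.inl (Or.inr h)
        · exact Or.inr (Or.inr h)
  · intro a b hadj ha hb
    rcases Set.mem_insert_iff.1 ha with rfl | ha'
    · exact Or.inl (Or.inl ⟨rfl, hb⟩)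
    · rcases Set.mem_insert_iff.1 hb with rfl | hb'
      · exact Or.inr (Or.inl ⟨rfl, ha⟩)
      · rcases D.lcover a b hadj ha' hb' with h | h
        · exact Or.inl (Or.inr h)
        · exact Or.inr (Or.inr h)
  · rintro a b c hadj hab hac hcb hne
    by_cases hay : a = y'
    · subst hay
      have hcy : c ≠ a := fun h => hne h.symm
      have hcb' : D.le c b := by
        rcases hcb with ⟨rfl, _⟩ | h
        · exact absurd rfl hcy
        · exact h
      have hbC : b ∈ C₀ := (D.supp c b hcb').2
      have := D.lprot i₀ a b c hσi₀ hadj hbC hcb'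
      simp only [if_pos rfl, if_neg hcy]
      exact fun h => this h.symm
    · have hab' : D.le a b := by
        rcases hab with ⟨h, _⟩ | h
        · exact absurd h hay
        · exact h
      have hac' : D.le a c := by
        rcases hac with ⟨h, _⟩ | h
        · exact absurd h hay
        · exact h
      have hcy : c ≠ y' := fun h => hy' (h ▸ (D.supp a c hac').2)
      have hcb' : D.le c b := by
        rcases hcb with ⟨h, _⟩ | h
        · exact absurd h hcy
        · exact h
      simp only [if_neg hay, if_neg hcy]
      exact D.lpeb a b c hadj hab' hac' hcb' hne
  · intro b hb
    rcases Set.mem_insert_iff.1 hb with rfl | hb'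
    · have : {a | (a = b ∧ b ∈ insert b C₀) ∨ D.le a b} = {b} := by
        ext a
        simp only [Set.mem_setOf_eq, Set.mem_singleton_iff]
        constructor
        · rintro (⟨rfl, _⟩ | h)
          · rfl
          · exact absurd ((D.supp a b h).2) hy'
        · rintro rfl
          exact Or.inl ⟨rfl, hb⟩
      rw [this, Set.ncard_singleton]
      omega
    · have : {a | (a = y' ∧ b ∈ insert y' C₀) ∨ D.le a b} = insert y' {a | D.le a b} := by
        ext a
        simp only [Set.mem_setOf_eq, Set.mem_insert_iff]
        constructor
        · rintro (⟨rfl, _⟩ | h)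
          · exact Or.inl rfl
          · exact Or.inr h
        · rintro (rfl | h)
          · exact Or.inl ⟨rfl, hb⟩
          · exact Or.inr h
      rw [this]
      have h1 := Set.ncard_insert_le y' {a | D.le a b}
      have h2 := D.lht b hb'
      omega
  · intro i z a b hiz hadj ha hba
    by_cases hii : i = i₀
    · exact absurd (hvacp z a (hii ▸ hiz) hadj ha) (fun h => h)
    · by_cases hby : b = y'
      · subst hby
        simp only [if_pos rfl]
        exact fun h => hii h.symm
      · have hba' : D.le b a := by
          rcases hba with ⟨h, _⟩ | h
          · exact absurd h hby
          · exact h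
        have haC : a ∈ C₀ := (D.supp b a hba').2
        simp only [if_neg hby]
        exact D.lprot i z a b (by rw [hσ i hii]; exact hiz) hadj haC hba'

end MonCR
namespace MonCR

variable {n k q : ℕ} {G : SimpleGraph (Fin n)}

theorem reach_eq2 {Y : Finset (Fin n ⊕ Fin k)} {r a b : Fin n}
    (ha : a ∈ Reach G Y r) (hb : b ∈ Reach G Y r) : Reach G Y b = Reach G Y a :=
  (reach_eq hb).trans (reach_eq ha).symm

theorem glueB (hk : 1 ≤ k) (τ : Fin k → Fin n ⊕ Fin k) (Y : Finset (Fin n ⊕ Fin k))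
    (C : Set (Fin n)) (q₀ : ℕ)
    (hmem : ∀ a ∈ C, a ∈ Reach G Y a)
    (hsub : ∀ a ∈ C, Reach G Y a ⊆ C)
    (hcov : ∀ a ∈ C, Nonempty (CovS G k τ (Reach G Y a) q₀)) :
    Nonempty (CovS G k τ C q₀) := by
  classical
  rcases C.eq_empty_or_nonempty with rfl | ⟨d, hd⟩
  · exact ⟨covOfEmpty τ q₀ hk (fun a ha => ha)⟩
  have f : ∀ a, a ∈ C → CovS G k τ (Reach G Y a) q₀ := fun a ha => (hcov a ha).some
  have hrfacts : ∀ a, a ∈ C → ∃ h : Rep d (Reach G Y a) ∈ C,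
      Reach G Y (Rep d (Reach G Y a)) = Reach G Y a ∧ a ∈ Reach G Y (Rep d (Reach G Y a)) := by
    intro a ha
    have h1 : a ∈ Reach G Y a := hmem a ha
    have h2 : Rep d (Reach G Y a) ∈ Reach G Y a := Rep_mem h1
    refine ⟨hsub a ha h2, reach_eq h2, ?_⟩
    rw [reach_eq h2]
    exact h1
  refine ⟨⟨fun a b => ∃ h : Rep d (Reach G Y a) ∈ C, (f _ h).le a b,
    fun a => if h : Rep d (Reach G Y a) ∈ C then (f _ h).peb a else ⟨0, hk⟩,
    ?_, ?_, ?_, ?_, ?_, ?_, ?_, ?_, ?_⟩⟩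
  case refine_1 =>
    rintro a b ⟨h, hab⟩
    have hs := (f _ h).supp a b hab
    exact ⟨hsub _ h hs.1, hsub _ h hs.2⟩
  case refine_2 =>
    intro a ha
    obtain ⟨hra, era, har⟩ := hrfacts a ha
    exact ⟨hra, (f _ hra).lrefl a har⟩
  case refine_3 =>
    rintro a b hab hba
    obtain ⟨h, hab'⟩ := hab
    have hs := (f _ h).supp a b hab'
    have e : Reach G Y b = Reach G Y a := reach_eq2 hs.1 hs.2
    rw [e] at hba
    obtain ⟨h2, hba'⟩ := hba
    exact (f _ h).lantisymm a b hab' hba'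
  case refine_4 =>
    rintro a b c hab hbc
    obtain ⟨h, hab'⟩ := hab
    have hs := (f _ h).supp a b hab'
    have e : Reach G Y b = Reach G Y a := reach_eq2 hs.1 hs.2
    rw [e] at hbc
    obtain ⟨h2, hbc'⟩ := hbc
    exact ⟨h, (f _ h).ltrans a b c hab' hbc'⟩
  case refine_5 =>
    rintro a b c hac hbc
    obtain ⟨h, hac'⟩ := hac
    have hs1 := (f _ h).supp a c hac'
    have e1 : Reach G Y c = Reach G Y a := reach_eq2 hs1.1 hs1.2
    obtain ⟨h2, hbc2⟩ := hbc
    have hs2 := (f _ h2).supp b c hbc2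
    have e2 : Reach G Y c = Reach G Y b := reach_eq2 hs2.1 hs2.2
    have e3 : Reach G Y b = Reach G Y a := e2.symm.trans e1
    have hbc' : (f _ h).le b c := by
      have hx : ∃ hh : Rep d (Reach G Y b) ∈ C, (f _ hh).le b c := ⟨h2, hbc2⟩
      rw [e3] at hx
      exact hx.choose_spec
    rcases (f _ h).ldown a b c hac' hbc' with hh | hh
    · exact Or.inl ⟨h, hh⟩
    · right
      show ∃ hx : Rep d (Reach G Y b) ∈ C, (f _ hx).le b a
      rw [e3]
      exact ⟨h, hh⟩
  case refine_6 =>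
    intro a b hadj ha hb
    obtain ⟨hra, era, har⟩ := hrfacts a ha
    have hbr : b ∈ Reach G Y a :=
      rm_single hadj (rm_start (hmem a ha)) (rm_start (hmem b hb))
    have hbra : b ∈ Reach G Y (Rep d (Reach G Y a)) := by rw [era]; exact hbr
    rcases (f _ hra).lcover a b hadj har hbra with h | h
    · exact Or.inl ⟨hra, h⟩
    · right
      show ∃ hx : Rep d (Reach G Y b) ∈ C, (f _ hx).le b a
      rw [reach_eq hbr]
      exact ⟨hra, h⟩
  case refine_7 =>
    rintro a b c hadj hab hac hcb hne
    obtain ⟨h, hab'⟩ := hab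
    obtain ⟨h3, hac3⟩ := hac
    have hs := (f _ h3).supp a c hac3
    have eac : Reach G Y c = Reach G Y a := reach_eq2 hs.1 hs.2
    have hac' : (f _ h).le a c := hac3
    have hcb' : (f _ h).le c b := by
      obtain ⟨h4, hcb4⟩ := hcb
      have hx : ∃ hh : Rep d (Reach G Y c) ∈ C, (f _ hh).le c b := ⟨h4, hcb4⟩
      rw [eac] at hx
      exact hx.choose_spec
    have hpa : (if hh : Rep d (Reach G Y a) ∈ C then (f _ hh).peb a else ⟨0, hk⟩) =
        (f _ h).peb a := dif_pos h
    have hpc : (if hh : Rep d (Reach G Y c) ∈ C then (f _ hh).peb c else ⟨0, hk⟩) =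
        (f _ h).peb c := by
      rw [eac]
      exact dif_pos h
    show (if hh : Rep d (Reach G Y a) ∈ C then (f _ hh).peb a else ⟨0, hk⟩) ≠
        (if hh : Rep d (Reach G Y c) ∈ C then (f _ hh).peb c else ⟨0, hk⟩)
    rw [hpa, hpc]
    exact (f _ h).lpeb a b c hadj hab' hac' hcb' hne
  case refine_8 =>
    intro b hb
    obtain ⟨hrb, erb, hbr⟩ := hrfacts b hb
    have hset : {a | ∃ h : Rep d (Reach G Y a) ∈ C, (f _ h).le a b} =
        {a | (f _ hrb).le a b} := by
      ext a
      simp only [Set.mem_setOf_eq]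
      constructor
      · intro hab
        obtain ⟨h, hab'⟩ := hab
        have hs := (f _ h).supp a b hab'
        have e : Reach G Y b = Reach G Y a := reach_eq2 hs.1 hs.2
        have hx : ∃ hh : Rep d (Reach G Y a) ∈ C, (f _ hh).le a b := ⟨h, hab'⟩
        rw [← e] at hx
        exact hx.choose_spec
      · intro hle
        have ha : a ∈ Reach G Y b := by rw [← erb]; exact ((f _ hrb).supp a b hle).1
        have e : Reach G Y a = Reach G Y b := reach_eq ha
        have hx : ∃ hh : Rep d (Reach G Y b) ∈ C, (f _ hh).le a b := ⟨hrb, hle⟩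
        rw [← e] at hx
        exact hx
    rw [hset]
    exact (f _ hrb).lht b hbr
  case refine_9 =>
    intro i z a b hiz hadj ha hba
    obtain ⟨hra, era, har⟩ := hrfacts a ha
    obtain ⟨h2, hba2⟩ := hba
    have hs := (f _ h2).supp b a hba2
    have e : Reach G Y b = Reach G Y a := reach_eq2 hs.2 hs.1
    have hba' : (f _ hra).le b a := by
      have hx : ∃ hh : Rep d (Reach G Y b) ∈ C, (f _ hh).le b a := ⟨h2, hba2⟩
      rw [e] at hx
      exact hx.choose_spec
    have hpb : (if hh : Rep d (Reach G Y b) ∈ C then (f _ hh).peb b else ⟨0, hk⟩) =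
        (f _ hra).peb b := by
      rw [e]
      exact dif_pos hra
    show (if hh : Rep d (Reach G Y b) ∈ C then (f _ hh).peb b else ⟨0, hk⟩) ≠ i
    rw [hpb]
    exact (f _ hra).lprot i z a b hiz hadj har hba'

end MonCR
namespace MonCR

variable {n k q : ℕ} {G : SimpleGraph (Fin n)}

theorem main_ind (hk : 1 ≤ k) : ∀ (q' : ℕ) (σ : Fin k → Fin n ⊕ Fin k),
    Function.Injective σ → ∀ v : Fin n,
    MonCopsCatch G k q' (Finset.univ.image σ) v →
    Nonempty (CovS G k σ (Reach G (Finset.univ.image σ) v) q') := by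
  intro q'
  induction q' with
  | zero => intro σ _ v h; exact h.elim
  | succ q'' ih =>
    intro σ hσ v hcatch
    classical
    obtain ⟨Y, hYk, hXYk, hmono, hstep⟩ := hcatch
    set X := Finset.univ.image σ with hXdef
    by_cases hvX : Sum.inl v ∈ X
    · exact ⟨covOfEmpty σ _ hk (fun a ha => (rm_start ha) hvX)⟩
    have hvC : v ∈ Reach G X v := rm_refl hvX
    have hXcard : X.card = k := by
      rw [hXdef, Finset.card_image_of_injective _ hσ, Finset.card_univ]
      simp
    have hsub1 : X ∩ Y ⊆ X := Finset.inter_subset_left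
    have hsub2 : X ∩ Y ⊆ Y := Finset.inter_subset_right
    have hsd : (X \ (X ∩ Y)).card = 1 := by
      rw [Finset.card_sdiff_of_subset hsub1]
      omega
    obtain ⟨o, ho⟩ := Finset.card_eq_one.1 hsd
    have hoX : o ∈ X := by
      have h := ho ▸ Finset.mem_singleton_self o
      exact (Finset.mem_sdiff.1 h).1
    have hoXY : o ∉ X ∩ Y := by
      have h := ho ▸ Finset.mem_singleton_self o
      exact (Finset.mem_sdiff.1 h).2
    have hXerase : X ∩ Y = X.erase o := by
      apply Finset.Subset.antisymm
      · intro z hz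
        refine Finset.mem_erase.2 ⟨?_, (Finset.mem_inter.1 hz).1⟩
        rintro rfl
        exact hoXY hz
      · intro z hz
        obtain ⟨hzo, hzX⟩ := Finset.mem_erase.1 hz
        by_contra hzXY
        have h : z ∈ X \ (X ∩ Y) := Finset.mem_sdiff.2 ⟨hzX, hzXY⟩
        rw [ho] at h
        exact hzo (Finset.mem_singleton.1 h)
    have hsd2 : (Y \ (X ∩ Y)).card = 1 := by
      rw [Finset.card_sdiff_of_subset hsub2]
      omega
    obtain ⟨y, hy⟩ := Finset.card_eq_one.1 hsd2
    have hyY : y ∈ Y := by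
      have h := hy ▸ Finset.mem_singleton_self y
      exact (Finset.mem_sdiff.1 h).1
    have hyXY : y ∉ X ∩ Y := by
      have h := hy ▸ Finset.mem_singleton_self y
      exact (Finset.mem_sdiff.1 h).2
    have hyX : y ∉ X := fun h => hyXY (Finset.mem_inter.2 ⟨h, hyY⟩)
    have hYeq : Y = insert y (X ∩ Y) := by
      apply Finset.Subset.antisymm
      · intro z hz
        by_cases hzy : z = y
        · exact hzy ▸ Finset.mem_insert_self _ _
        · refine Finset.mem_insert_of_mem ?_
          by_contra hzXY
          have h : z ∈ Y \ (X ∩ Y) := Finset.mem_sdiff.2 ⟨hz, hzXY⟩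
          rw [hy] at h
          exact hzy (Finset.mem_singleton.1 h)
      · intro z hz
        rcases Finset.mem_insert.1 hz with rfl | hz
        · exact hyY
        · exact hsub2 hz
    obtain ⟨i₀, -, hi₀⟩ := Finset.mem_image.1 hoX
    set σ' := Function.update σ i₀ y with hσ'def
    have hσ'i₀ : σ' i₀ = y := Function.update_self i₀ y σ
    have hσ'j : ∀ j, j ≠ i₀ → σ' j = σ j := fun j hj => Function.update_of_ne hj y σ
    have hσ'inj : Function.Injective σ' := by
      intro a b hab
      by_cases ha : a = i₀ <;> by_cases hb : b = i₀
      · rw [ha, hb]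
      · subst ha
        rw [hσ'i₀, hσ'j b hb] at hab
        exact absurd (Finset.mem_image.2 ⟨b, Finset.mem_univ _, hab.symm⟩ : y ∈ X) hyX
      · subst hb
        rw [hσ'i₀, hσ'j a ha] at hab
        exact absurd (Finset.mem_image.2 ⟨a, Finset.mem_univ _, hab⟩ : y ∈ X) hyX
      · rw [hσ'j a ha, hσ'j b hb] at hab
        exact hσ hab
    have him : Finset.univ.image σ' = Y := by
      apply Finset.Subset.antisymm
      · intro z hz
        obtain ⟨j, -, hj⟩ := Finset.mem_image.1 hz
        by_cases hji : j = i₀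
        · subst hji
          rw [hσ'i₀] at hj
          exact hj ▸ hyY
        · rw [hσ'j j hji] at hj
          have hzX : z ∈ X := Finset.mem_image.2 ⟨j, Finset.mem_univ _, hj⟩
          have hzo : z ≠ o := by
            rintro rfl
            exact hji (hσ (hj.trans hi₀.symm))
          exact hsub2 (hXerase ▸ Finset.mem_erase.2 ⟨hzo, hzX⟩)
      · intro z hz
        rw [hYeq] at hz
        rcases Finset.mem_insert.1 hz with rfl | hz
        · exact Finset.mem_image.2 ⟨i₀, Finset.mem_univ _, hσ'i₀⟩
        · rw [hXerase] at hz
          obtain ⟨hzo, hzX⟩ := Finset.mem_erase.1 hz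
          obtain ⟨j, -, hj⟩ := Finset.mem_image.1 hzX
          have hji : j ≠ i₀ := by
            rintro rfl
            exact hzo ((hi₀.symm.trans hj).symm)
          exact Finset.mem_image.2 ⟨j, Finset.mem_univ _, by rw [hσ'j j hji]; exact hj⟩
    have hvac : ∀ z a, o = Sum.inl z → G.Adj z a → a ∈ Reach G X v → False := by
      intro z a hoz hadj haC
      have h1 : RobberMove G (X ∩ Y) v a := rm_anti hsub1 haC
      have hzXY : Sum.inl z ∉ X ∩ Y := by rw [← hoz]; exact hoXY
      have h2 : RobberMove G (X ∩ Y) v z := rm_trans h1 (rm_single hadj.symm (rm_end h1) hzXY)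
      have h3 := hmono z h2
      exact (rm_end h3) (hoz ▸ hoX)
    have hCnotX : ∀ a, a ∈ Reach G X v → Sum.inl a ∉ X := fun a ha => rm_end ha
    have hsubC : ∀ a, a ∈ Reach G X v → Reach G Y a ⊆ Reach G X v := by
      intro a haC x hx
      exact hmono x (rm_trans (rm_anti hsub1 haC) (rm_anti hsub2 hx))
    have hmemC : ∀ a, a ∈ Reach G X v → Sum.inl a ≠ y → a ∈ Reach G Y a := by
      intro a haC hay
      refine rm_refl ?_
      rw [hYeq]
      intro hmem
      rcases Finset.mem_insert.1 hmem with h | h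
      · exact hay h
      · exact hCnotX a haC (hsub1 h)
    have hcatch' : ∀ a, a ∈ Reach G X v → Sum.inl a ≠ y → MonCopsCatch G k q'' Y a := by
      intro a haC hay
      rcases hstep a (rm_anti hsub1 haC) with h | h
      · exfalso
        rw [hYeq] at h
        rcases Finset.mem_insert.1 h with h | h
        · exact hay h
        · exact hCnotX a haC (hsub1 h)
      · exact h
    have hcov' : ∀ a, a ∈ Reach G X v → Sum.inl a ≠ y →
        Nonempty (CovS G k σ' (Reach G Y a) q'') := by
      intro a haC hay
      have h := ih σ' hσ'inj a (by rw [him]; exact hcatch' a haC hay)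
      rwa [him] at h
    by_cases hyC : ∃ y' : Fin n, y = Sum.inl y' ∧ y' ∈ Reach G X v
    · obtain ⟨y', rfl, hy'C⟩ := hyC
      have hins : insert y' (Reach G X v \ {y'}) = Reach G X v := by
        rw [Set.insert_diff_singleton]
        exact Set.insert_eq_of_mem hy'C
      have hg := glueB hk σ' Y (Reach G X v \ {y'}) q''
        (fun a ha => hmemC a ha.1 (fun h => ha.2 (Sum.inl_injective h)))
        (fun a ha x hx => by
          refine ⟨hsubC a ha.1 hx, ?_⟩
          intro hxy
          rw [Set.mem_singleton_iff] at hxy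
          subst hxy
          exact (rm_end hx) hyY)
        (fun a ha => hcov' a ha.1 (fun h => ha.2 (Sum.inl_injective h)))
      obtain ⟨D⟩ := hg
      have hres := addRoot (σ := σ) D y' (fun h => h.2 rfl) i₀ hσ'i₀ hσ'j
        (fun z a hz hadj ha => hvac z a (hi₀.symm.trans hz) hadj (hins ▸ ha))
      rwa [hins] at hres
    · have hnoY : ∀ a, a ∈ Reach G X v → Sum.inl a ≠ y := by
        intro a haC h
        exact hyC ⟨a, h.symm, haC⟩
      have hg := glueB hk σ' Y (Reach G X v) q''
        (fun a ha => hmemC a ha (hnoY a ha))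
        (fun a ha => hsubC a ha)
        (fun a ha => hcov' a ha (hnoY a ha))
      obtain ⟨D⟩ := hg
      exact reslot D i₀ hσ'j (fun z a hz hadj ha => hvac z a (hi₀.symm.trans hz) hadj ha)

end MonCR
namespace MonCR

variable {n k q : ℕ} {G : SimpleGraph (Fin n)}

theorem win_to_pfc (hk : 1 ≤ k) (hwin : MonCopsWinGame G k q) : HasPFC G k q := by
  classical
  have hinj : Function.Injective (Sum.inr : Fin k → Fin n ⊕ Fin k) := Sum.inr_injective
  have him : Finset.univ.image (Sum.inr : Fin k → Fin n ⊕ Fin k) = initPos (Fin n) k := rfl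
  have hniP : ∀ a : Fin n, Sum.inl a ∉ initPos (Fin n) k := by
    intro a ha
    simp [initPos] at ha
  have hcov : ∀ a : Fin n, a ∈ (Set.univ : Set (Fin n)) →
      Nonempty (CovS G k (Sum.inr : Fin k → Fin n ⊕ Fin k)
        (Reach G (initPos (Fin n) k) a) q) := by
    intro a _
    have h := main_ind hk q Sum.inr hinj a (by rw [him]; exact hwin a)
    rwa [him] at h
  obtain ⟨D⟩ := glueB hk Sum.inr (initPos (Fin n) k) Set.univ q
    (fun a _ => rm_refl (hniP a))
    (fun a _ _ _ => Set.mem_univ _)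
    hcov
  refine ⟨⟨D.le, fun v => D.lrefl v (Set.mem_univ v), D.lantisymm, D.ltrans, D.ldown,
    D.peb, fun u v h => D.lcover u v h (Set.mem_univ _) (Set.mem_univ _),
    fun u v w h1 h2 h3 h4 h5 => D.lpeb u v w h1 h2 h3 h4 h5,
    fun v => D.lht v (Set.mem_univ v)⟩⟩

end MonCR


/-- Cops wins the monotone `q`-round `k`-cops-and-robber game on `G` iff `G` admits a
`k`-pebble forest cover of depth at most `q`. -/
theorem monCR_iff_pfc (k q : ℕ) (hk : 1 ≤ k) (hq : 1 ≤ q) {n : ℕ}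
    (G : SimpleGraph (Fin n)) :
    MonCopsWinGame G k q ↔ HasPFC G k q := by
  constructor
  · intro hwin
    exact MonCR.win_to_pfc hk hwin
  · rintro ⟨P⟩
    exact MonCR.pfc_to_win P hk hq
end
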